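/- arXiv:2101.05354 — 7 statements merged into one kernel-verified Lean document; each statement's English description precedes it below -/
import Mathlib

section
/- For all r, A ∈ ℕ and ε, η > 0 there exists N ∈ ℕ such that the following holds. Suppose n = n_1 + ⋯ + n_r ≥ N, the vector (n_1,…,n_r) is A-balanced, Λ is connected and ε-separated, and ρ(M) ≤ 1 − ε. Then with probability at least 1 − η, every connected component of G ∼ G(n⃗,P) has at most η·n vertices. -/
open MeasureTheory Matrix

namespace Pandemic

variable {r : ℕ}

/-- The vertex set: `n i` vertices of each type `i`. -/
abbrev Vert (n : Fin r → ℕ) : Type := (i : Fin r) × Fin (n i)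

/-- The largest (real) eigenvalue of a matrix. -/
noncomputable def maxEig (M : Matrix (Fin r) (Fin r) ℝ) : ℝ :=
  sSup {t : ℝ | Module.End.HasEigenvalue (Matrix.toLin' M) t}

/-- `(n_1,…,n_r)` is `A`-balanced if `n i ≤ A * n j` for all `i, j`. -/
def Balanced (A : ℕ) (n : Fin r → ℕ) : Prop := ∀ i j, n i ≤ A * n j

/-- `Λ` is `ε`-separated: every entry is `0` or lies in `[ε, 1/ε]`. -/
def Separated (ε : ℝ) (Λ : Matrix (Fin r) (Fin r) ℝ) : Prop :=
  ∀ i j, Λ i j = 0 ∨ (ε ≤ Λ i j ∧ Λ i j ≤ 1 / ε)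

/-- The graph on types: `i ~ j` iff `Λ i j > 0` (symmetrized). -/
def typeGraph (Λ : Matrix (Fin r) (Fin r) ℝ) : SimpleGraph (Fin r) where
  Adj i j := i ≠ j ∧ (0 < Λ i j ∨ 0 < Λ j i)
  symm := by
    constructor
    intro i j h
    exact ⟨h.1.symm, h.2.symm⟩
  loopless := by constructor; intro i h; exact h.1 rfl

/-- `Λ` is connected if the graph on types with edges at positive entries is connected. -/
def ConnectedTypes (Λ : Matrix (Fin r) (Fin r) ℝ) : Prop := (typeGraph Λ).Connected

/-- The matrix of infection probabilities `p i j = Λ i j / √(n i * n j)`. -/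
noncomputable def pMat (n : Fin r → ℕ) (Λ : Matrix (Fin r) (Fin r) ℝ) :
    Matrix (Fin r) (Fin r) ℝ :=
  fun i j => Λ i j / Real.sqrt ((n i : ℝ) * (n j : ℝ))

/-- The descendants matrix `M i j = p i j * n j`. -/
noncomputable def mMat (n : Fin r → ℕ) (Λ : Matrix (Fin r) (Fin r) ℝ) :
    Matrix (Fin r) (Fin r) ℝ :=
  fun i j => pMat n Λ i j * (n j : ℝ)

/-- The product Bernoulli measure on edge-indicators: the (unordered) pair `{u, v}`
is an edge independently with probability `p (type u) (type v)`. -/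
noncomputable def graphMeasure (n : Fin r → ℕ) (p : Fin r → Fin r → ℝ) :
    Measure (Sym2 (Vert n) → Bool) :=
  Measure.pi fun s =>
    (PMF.bernoulli (min (Real.toNNReal (p (Quot.out s).1.1 (Quot.out s).2.1)) 1)
      (min_le_right _ _)).toMeasure

/-- The graph determined by an edge-indicator function. -/
def graphOf {n : Fin r → ℕ} (ω : Sym2 (Vert n) → Bool) : SimpleGraph (Vert n) where
  Adj u v := u ≠ v ∧ ω s(u, v) = true
  symm := by
    constructor
    intro u v h
    exact ⟨h.1.symm, by rw [Sym2.eq_swap]; exact h.2⟩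
  loopless := by constructor; intro u h; exact h.1 rfl

/-- The number of vertices in the connected component of `v`. -/
noncomputable def compSize {n : Fin r → ℕ} (ω : Sym2 (Vert n) → Bool) (v : Vert n) : ℕ :=
  {u | (graphOf ω).Reachable v u}.ncard

/-- The Euclidean norm on `ℝ^r`. -/
noncomputable def euclNorm (z : Fin r → ℝ) : ℝ := Real.sqrt (∑ i, z i ^ 2)

open scoped ENNReal RealInnerProductSpace

section Aux

variable {n : Fin r → ℕ} {p : Fin r → Fin r → ℝ} {Λ : Matrix (Fin r) (Fin r) ℝ}

section Meas

variable {n : Fin r → ℕ} {p : Fin r → Fin r → ℝ}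

lemma measurableSet_all (s : Set (Sym2 (Vert n) → Bool)) : MeasurableSet s := by
  have h1 : ∀ f : Sym2 (Vert n) → Bool, MeasurableSet ({f} : Set (Sym2 (Vert n) → Bool)) := by
    intro f
    have : ({f} : Set (Sym2 (Vert n) → Bool)) = Set.pi Set.univ (fun e => {f e}) := by
      ext g
      simp [Set.mem_pi, funext_iff, eq_comm]
    rw [this]
    exact MeasurableSet.univ_pi fun e => measurableSet_singleton _
  have : s = ⋃ f ∈ s, {f} := by simp
  rw [this]
  exact MeasurableSet.biUnion s.to_countable fun f _ => h1 f

instance : IsProbabilityMeasure (graphMeasure n p) := by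
  unfold graphMeasure; infer_instance

lemma measure_cyl (S : Finset (Sym2 (Vert n))) :
    graphMeasure n p {ω | ∀ e ∈ S, ω e = true}
      = ∏ e ∈ S, min (ENNReal.ofReal (p (Quot.out e).1.1 (Quot.out e).2.1)) 1 := by
  classical
  have hset : {ω : Sym2 (Vert n) → Bool | ∀ e ∈ S, ω e = true}
      = Set.pi Set.univ (fun e => if e ∈ S then {true} else Set.univ) := by
    ext ω
    simp only [Set.mem_setOf_eq, Set.mem_pi, Set.mem_univ, forall_true_left]
    constructor
    · intro h e
      by_cases he : e ∈ S <;> simp [he, h e]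
    · intro h e he
      have := h e
      simpa [he] using this
  rw [hset, graphMeasure, Measure.pi_pi]
  have : ∀ e : Sym2 (Vert n),
      (PMF.bernoulli (min (Real.toNNReal (p (Quot.out e).1.1 (Quot.out e).2.1)) 1)
        (min_le_right _ _)).toMeasure (if e ∈ S then ({true} : Set Bool) else Set.univ)
      = if e ∈ S then min (ENNReal.ofReal (p (Quot.out e).1.1 (Quot.out e).2.1)) 1 else 1 := by
    intro e
    by_cases he : e ∈ S
    · simp only [he, if_true]
      rw [PMF.toMeasure_apply_singleton _ _ (measurableSet_singleton _)]
      rfl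
    · simp only [he, if_false]; exact measure_univ
  simp_rw [this]
  rw [Finset.prod_ite_mem, Finset.univ_inter]

end Meas

/-- weight of a path: product of edge probabilities. -/
noncomputable def wt (p : Fin r → Fin r → ℝ) : Vert n → List (Vert n) → ℝ
  | _, [] => 1
  | v, w :: L => p v.1 w.1 * wt p w L

lemma wt_nonneg (hp : ∀ i j, 0 ≤ p i j) : ∀ (v : Vert n) (L : List (Vert n)), 0 ≤ wt p v L
  | _, [] => zero_le_one
  | v, w :: L => mul_nonneg (hp _ _) (wt_nonneg hp w L)

/-- the edges along a path. -/
def edgeList : Vert n → List (Vert n) → List (Sym2 (Vert n))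
  | _, [] => []
  | v, w :: L => s(v, w) :: edgeList w L

lemma mem_of_mem_edgeList : ∀ (v : Vert n) (L : List (Vert n)) (e : Sym2 (Vert n)),
    e ∈ edgeList v L → ∀ x ∈ e, x ∈ v :: L
  | _, [], _, he => by simp [edgeList] at he
  | v, w :: L, e, he => by
    intro x hx
    rcases List.mem_cons.1 he with h | h
    · subst h
      rcases Sym2.mem_iff.1 hx with h | h
      · simp [h]
      · simp [h]
    · have := mem_of_mem_edgeList w L e h x hx
      simp only [List.mem_cons] at this ⊢
      tauto

lemma edgeList_nodup : ∀ (v : Vert n) (L : List (Vert n)), (v :: L).Nodup → (edgeList v L).Nodup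
  | _, [], _ => List.nodup_nil
  | v, w :: L, h => by
    rw [edgeList, List.nodup_cons]
    have h' : (w :: L).Nodup := (List.nodup_cons.1 h).2
    refine ⟨?_, edgeList_nodup w L h'⟩
    intro hmem
    have hv : v ∈ w :: L := mem_of_mem_edgeList w L _ hmem v (by simp)
    exact (List.nodup_cons.1 h).1 hv

lemma chain_iff_edgeList (ω : Sym2 (Vert n) → Bool) :
    ∀ (v : Vert n) (L : List (Vert n)),
      List.Chain (fun a b => ω s(a, b) = true) v L ↔ ∀ e ∈ edgeList v L, ω e = true
  | _, [] => by simp [edgeList, List.Chain]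
  | v, w :: L => by
    show List.IsChain _ (v :: w :: L) ↔ _
    rw [List.isChain_cons_cons, edgeList]
    simp only [List.mem_cons, forall_eq_or_imp]
    exact and_congr Iff.rfl (chain_iff_edgeList ω w L)


lemma out_min_le (hsymm : ∀ i j, p i j = p j i) (a b : Vert n) :
    min (ENNReal.ofReal (p (Quot.out s(a, b)).1.1 (Quot.out s(a, b)).2.1)) 1
      ≤ ENNReal.ofReal (p a.1 b.1) := by
  have h : Quot.mk (Sym2.Rel _) (Quot.out s(a, b)) = s(a, b) := Quot.out_eq _
  rcases hq : Quot.out s(a, b) with ⟨x, y⟩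
  rw [hq] at h
  rcases Sym2.eq_iff.1 h with ⟨h1, h2⟩ | ⟨h1, h2⟩
  · rw [h1, h2]; exact min_le_left _ _
  · rw [h1, h2, hsymm]; exact min_le_left _ _


lemma prod_edge_le (hp : ∀ i j, 0 ≤ p i j) (hsymm : ∀ i j, p i j = p j i) :
    ∀ (v : Vert n) (L : List (Vert n)),
      ((edgeList v L).map
          (fun e => min (ENNReal.ofReal (p (Quot.out e).1.1 (Quot.out e).2.1)) 1)).prod
        ≤ ENNReal.ofReal (wt p v L)
  | _, [] => by simp [edgeList, wt]
  | v, w :: L => by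
    rw [edgeList, List.map_cons, List.prod_cons, wt,
      ENNReal.ofReal_mul (hp v.1 w.1)]
    exact mul_le_mul' (out_min_le hsymm v w) (prod_edge_le hp hsymm w L)

lemma measure_chain_le (hp : ∀ i j, 0 ≤ p i j) (hsymm : ∀ i j, p i j = p j i)
    (v : Vert n) (L : List (Vert n)) (hnd : (v :: L).Nodup) :
    graphMeasure n p {ω | List.Chain (fun a b => ω s(a, b) = true) v L}
      ≤ ENNReal.ofReal (wt p v L) := by
  classical
  have hset : {ω : Sym2 (Vert n) → Bool | List.Chain (fun a b => ω s(a, b) = true) v L}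
      = {ω | ∀ e ∈ (edgeList v L).toFinset, ω e = true} := by
    ext ω
    simp [chain_iff_edgeList ω v L, List.mem_toFinset]
  rw [hset, measure_cyl, List.prod_toFinset _ (edgeList_nodup v L hnd)]
  exact prod_edge_le hp hsymm v L

lemma sum_wt (ℓ : ℕ) (v : Vert n) :
    ∑ g : Fin ℓ → Vert n, wt (fun i j => pMat n Λ i j) v (List.ofFn g)
      = ((mMat n Λ) ^ ℓ *ᵥ 1) v.1 := by
  induction ℓ generalizing v with
  | zero =>
    simp only [pow_zero, Matrix.one_mulVec]
    rw [Fintype.sum_unique]  -- maybe needs Unique instance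
    simp [wt, List.ofFn_zero]
  | succ ℓ ih =>
    have hcons : ∀ (w : Vert n) (g : Fin ℓ → Vert n),
        List.ofFn (Fin.cons w g : Fin (ℓ+1) → Vert n) = w :: List.ofFn g := by
      intro w g
      rw [List.ofFn_succ]
      simp [Fin.cons_zero, Fin.cons_succ]
    rw [← (Fin.consEquiv (fun _ : Fin (ℓ+1) => Vert n)).sum_comp
        (fun g => wt (fun i j => pMat n Λ i j) v (List.ofFn g))]
    rw [Fintype.sum_prod_type]
    have : ∀ w : Vert n, ∑ g : Fin ℓ → Vert n,
        wt (fun i j => pMat n Λ i j) v (List.ofFn (Fin.consEquiv _ (w, g)))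
        = pMat n Λ v.1 w.1 * ((mMat n Λ) ^ ℓ *ᵥ 1) w.1 := by
      intro w
      have : ∀ g : Fin ℓ → Vert n, (Fin.consEquiv (fun _ : Fin (ℓ+1) => Vert n)) (w, g)
          = Fin.cons w g := fun g => rfl
      simp_rw [this, hcons, wt, ← Finset.mul_sum]
      rw [ih w]
    simp_rw [this]
    rw [pow_succ' (mMat n Λ) ℓ, ← Matrix.mulVec_mulVec]
    rw [Matrix.mulVec]
    simp only [dotProduct, mMat]
    rw [← Finset.univ_sigma_univ, Finset.sum_sigma]
    congr 1
    ext j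
    show ∑ _s : Fin (n j), pMat n Λ v.fst j * ((mMat n Λ ^ ℓ *ᵥ 1) j) = _
    rw [Finset.sum_const, nsmul_eq_mul]
    simp only [Finset.card_univ, Fintype.card_fin]
    ring

lemma measure_reach_le (hp : ∀ i j, 0 ≤ p i j) (hsymm : ∀ i j, p i j = p j i) (v u : Vert n) :
    graphMeasure n p {ω | (graphOf ω).Reachable v u} ≤
      ∑ ℓ ∈ Finset.range (Fintype.card (Vert n)), ∑ g : Fin ℓ → Vert n,
        (if (v :: List.ofFn g).getLast? = some u
         then ENNReal.ofReal (wt p v (List.ofFn g)) else 0) := by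
  classical
  set A : (ℓ : ℕ) → (Fin ℓ → Vert n) → Set (Sym2 (Vert n) → Bool) := fun ℓ g =>
    if (v :: List.ofFn g).Nodup ∧ (v :: List.ofFn g).getLast? = some u
    then {ω | List.Chain (fun a b => ω s(a, b) = true) v (List.ofFn g)} else ∅ with hA
  have hsub : {ω | (graphOf ω).Reachable v u} ⊆
      ⋃ ℓ ∈ Finset.range (Fintype.card (Vert n)), ⋃ g : Fin ℓ → Vert n, A ℓ g := by
    intro ω hω
    obtain ⟨w0⟩ := hω
    set q : (graphOf ω).Walk v u := (w0.toPath : (graphOf ω).Path v u).1 with hqdef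
    have hq : q.IsPath := (w0.toPath : (graphOf ω).Path v u).2
    set st := q.support.tail with hst
    have hsupp : q.support = v :: st := SimpleGraph.Walk.support_eq_cons _
    have hlen : st.length = q.length := by
      have h2 := SimpleGraph.Walk.length_support q
      rw [hsupp] at h2
      simpa using h2
    have hℓmem : st.length ∈ Finset.range (Fintype.card (Vert n)) := by
      rw [Finset.mem_range, hlen]
      exact SimpleGraph.Walk.IsPath.length_lt hq
    have hofn : List.ofFn st.get = st := List.ofFn_get st
    refine Set.mem_biUnion hℓmem ?_
    refine Set.mem_iUnion.2 ⟨st.get, ?_⟩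
    have hcond : (v :: List.ofFn st.get).Nodup ∧ (v :: List.ofFn st.get).getLast? = some u := by
      rw [hofn]
      constructor
      · rw [← hsupp]; exact hq.support_nodup
      · rw [← hsupp]
        rw [List.getLast?_eq_getLast (SimpleGraph.Walk.support_ne_nil q)]
        rw [SimpleGraph.Walk.getLast_support]
    rw [hA]
    simp only [hcond, if_true]
    show List.Chain (fun a b => ω s(a, b) = true) v (List.ofFn st.get)
    rw [hofn]
    have hch : List.IsChain (graphOf ω).Adj q.support := SimpleGraph.Walk.isChain_adj_support q
    rw [hsupp] at hch
    have hch2 : List.Chain (graphOf ω).Adj v st := hch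
    exact List.IsChain.imp (fun a b hab => hab.2) hch2
  calc graphMeasure n p {ω | (graphOf ω).Reachable v u}
      ≤ graphMeasure n p (⋃ ℓ ∈ Finset.range (Fintype.card (Vert n)), ⋃ g : Fin ℓ → Vert n, A ℓ g) :=
        measure_mono hsub
    _ ≤ ∑ ℓ ∈ Finset.range (Fintype.card (Vert n)),
        graphMeasure n p (⋃ g : Fin ℓ → Vert n, A ℓ g) := measure_biUnion_finset_le _ _
    _ ≤ ∑ ℓ ∈ Finset.range (Fintype.card (Vert n)), ∑ g : Fin ℓ → Vert n,
        graphMeasure n p (A ℓ g) := by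
        refine Finset.sum_le_sum fun ℓ _ => ?_
        have : (⋃ g : Fin ℓ → Vert n, A ℓ g) = ⋃ g ∈ (Finset.univ : Finset (Fin ℓ → Vert n)), A ℓ g := by
          simp
        rw [this]
        exact measure_biUnion_finset_le _ _
    _ ≤ _ := by
        refine Finset.sum_le_sum fun ℓ _ => Finset.sum_le_sum fun g _ => ?_
        rw [hA]
        by_cases hc : (v :: List.ofFn g).Nodup ∧ (v :: List.ofFn g).getLast? = some u
        · simp only [hc, if_true, hc.2]
          exact measure_chain_le hp hsymm v _ hc.1
        · simp only [hc, if_false]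
          simp only [measure_empty]
          exact zero_le

section Spectral

/-- identity map into Euclidean space -/
noncomputable def toE : (Fin r → ℝ) → EuclideanSpace ℝ (Fin r) := (WithLp.equiv 2 _).symm

lemma hasEig_iff' {M : Type*} [AddCommGroup M] [Module ℝ M] (f : Module.End ℝ M) (t : ℝ) :
    f.HasEigenvalue t ↔ ∃ x : M, f x = t • x ∧ x ≠ 0 := by
  rw [Module.End.hasEigenvalue_iff, Submodule.ne_bot_iff]
  constructor
  · rintro ⟨x, hx, h0⟩
    exact ⟨x, Module.End.mem_eigenspace_iff.1 hx, h0⟩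
  · rintro ⟨x, hx, h0⟩
    exact ⟨x, Module.End.mem_eigenspace_iff.2 hx, h0⟩

lemma mMat_mulVec (hn : ∀ i, 0 < n i) (w : Fin r → ℝ) (i : Fin r) :
    (mMat n Λ *ᵥ w) i
      = (Real.sqrt (n i))⁻¹ * ((Λ *ᵥ fun j => Real.sqrt (n j) * w j) i) := by
  simp only [Matrix.mulVec, dotProduct, mMat, pMat, Finset.mul_sum]
  refine Finset.sum_congr rfl fun j _ => ?_
  have hi : (0:ℝ) < Real.sqrt (n i) := Real.sqrt_pos.2 (by exact_mod_cast hn i)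
  have hj : (0:ℝ) < Real.sqrt (n j) := Real.sqrt_pos.2 (by exact_mod_cast hn j)
  have hsq : Real.sqrt ((n i : ℝ) * (n j : ℝ)) = Real.sqrt (n i) * Real.sqrt (n j) :=
    Real.sqrt_mul (by positivity) _
  have hnj : (n j : ℝ) = Real.sqrt (n j) * Real.sqrt (n j) :=
    (Real.mul_self_sqrt (by positivity)).symm
  rw [hsq]
  field_simp
  nth_rewrite 1 [hnj]
  ring

lemma mMat_pow_one (hn : ∀ i, 0 < n i) :
    ∀ (ℓ : ℕ) (i : Fin r), ((mMat n Λ) ^ ℓ *ᵥ 1) i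
      = (Real.sqrt (n i))⁻¹ * ((Λ ^ ℓ *ᵥ fun j => Real.sqrt (n j)) i) := by
  intro ℓ
  induction ℓ with
  | zero =>
    intro i
    have hi : (0:ℝ) < Real.sqrt (n i) := Real.sqrt_pos.2 (by exact_mod_cast hn i)
    simp [Matrix.one_mulVec, inv_mul_cancel₀ hi.ne']
  | succ ℓ ih =>
    intro i
    rw [pow_succ' (mMat n Λ) ℓ, ← Matrix.mulVec_mulVec, mMat_mulVec hn]
    have : (fun j => Real.sqrt (n j) * ((mMat n Λ) ^ ℓ *ᵥ 1) j)
        = (Λ ^ ℓ *ᵥ fun j => Real.sqrt (n j)) := by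
      funext j
      have hj : (0:ℝ) < Real.sqrt (n j) := Real.sqrt_pos.2 (by exact_mod_cast hn j)
      rw [ih j, ← mul_assoc, mul_inv_cancel₀ hj.ne', one_mul]
    rw [this, Matrix.mulVec_mulVec, ← pow_succ']

lemma eig_mMat_iff (hn : ∀ i, 0 < n i) (t : ℝ) :
    Module.End.HasEigenvalue (Matrix.toLin' (mMat n Λ)) t
      ↔ Module.End.HasEigenvalue (Matrix.toLin' Λ) t := by
  rw [hasEig_iff', hasEig_iff']
  have hs : ∀ i, (Real.sqrt (n i) : ℝ) ≠ 0 :=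
    fun i => (Real.sqrt_pos.2 (by exact_mod_cast hn i)).ne'
  constructor
  · rintro ⟨z, hz, h0⟩
    refine ⟨fun j => Real.sqrt (n j) * z j, ?_, ?_⟩
    · funext i
      have h1 := mMat_mulVec (Λ := Λ) hn z i
      rw [Matrix.toLin'_apply] at hz
      have h2 : (mMat n Λ *ᵥ z) i = t * z i := by rw [hz]; simp
      rw [h2] at h1
      rw [Matrix.toLin'_apply]
      have := congrArg (fun a => Real.sqrt (n i) * a) h1
      rw [← mul_assoc, ← mul_assoc, mul_inv_cancel₀ (hs i), one_mul] at this
      rw [← this]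
      simp only [Pi.smul_apply, smul_eq_mul]
      ring
    · intro hzero
      apply h0
      funext i
      have := congrFun hzero i
      simp only [Pi.zero_apply] at this ⊢
      exact (mul_eq_zero.1 this).resolve_left (hs i)
  · rintro ⟨x, hx, h0⟩
    refine ⟨fun j => (Real.sqrt (n j))⁻¹ * x j, ?_, ?_⟩
    · funext i
      rw [Matrix.toLin'_apply] at hx ⊢
      have h1 := mMat_mulVec (Λ := Λ) hn (fun j => (Real.sqrt (n j))⁻¹ * x j) i
      have : (fun j => Real.sqrt (n j) * ((Real.sqrt (n j))⁻¹ * x j)) = x := by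
        funext j; rw [← mul_assoc, mul_inv_cancel₀ (hs j), one_mul]
      rw [this, hx] at h1
      simp only [Pi.smul_apply, smul_eq_mul] at h1 ⊢
      rw [h1]; ring
    · intro hzero
      apply h0
      funext i
      have := congrFun hzero i
      simp only [Pi.zero_apply] at this ⊢
      have := (mul_eq_zero.1 this).resolve_left (inv_ne_zero (hs i))
      exact this

lemma eig_eucl_iff (A : Matrix (Fin r) (Fin r) ℝ) (t : ℝ) :
    Module.End.HasEigenvalue (Matrix.toEuclideanLin A) t
      ↔ Module.End.HasEigenvalue (Matrix.toLin' A) t := by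
  rw [hasEig_iff', hasEig_iff']
  constructor
  · rintro ⟨x, hx, h0⟩
    exact ⟨(WithLp.equiv 2 _) x, congrArg WithLp.ofLp hx, by simpa using h0⟩
  · rintro ⟨x, hx, h0⟩
    exact ⟨(WithLp.equiv 2 _).symm x, congrArg (WithLp.toLp 2) hx, by simpa using h0⟩

lemma eig_abs_le (hnn : ∀ i j, 0 ≤ Λ i j) (t : ℝ)
    (h : Module.End.HasEigenvalue (Matrix.toLin' Λ) t) :
    |t| ≤ ∑ i, ∑ j, Λ i j := by
  obtain ⟨x, hx, h0⟩ := (hasEig_iff' _ t).1 h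
  obtain ⟨i, -, hi⟩ := Finset.exists_max_image Finset.univ (fun i => |x i|)
    (Finset.univ_nonempty_iff.2 (by
      rcases Function.ne_iff.1 h0 with ⟨k, -⟩
      exact ⟨k⟩))
  obtain ⟨k, hk⟩ := Function.ne_iff.1 h0
  have hxi : 0 < |x i| := lt_of_lt_of_le (abs_pos.2 (by simpa using hk)) (hi k (Finset.mem_univ k))
  have hrow : |t| * |x i| ≤ (∑ i', ∑ j, Λ i' j) * |x i| := by
    have h1 : (Matrix.toLin' Λ x) i = t * x i := by rw [hx]; simp
    rw [Matrix.toLin'_apply] at h1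
    have h2 : |t * x i| ≤ (∑ j, Λ i j) * |x i| := by
      rw [← h1]
      calc |(Λ *ᵥ x) i| ≤ ∑ j, |Λ i j * x j| := by
            rw [Matrix.mulVec, dotProduct]
            exact Finset.abs_sum_le_sum_abs _ _
        _ ≤ ∑ j, Λ i j * |x i| := by
            refine Finset.sum_le_sum fun j _ => ?_
            rw [abs_mul, abs_of_nonneg (hnn i j)]
            exact mul_le_mul_of_nonneg_left (hi j (Finset.mem_univ j)) (hnn i j)
        _ = (∑ j, Λ i j) * |x i| := by rw [Finset.sum_mul]
    calc |t| * |x i| = |t * x i| := (abs_mul t (x i)).symm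
      _ ≤ (∑ j, Λ i j) * |x i| := h2
      _ ≤ (∑ i', ∑ j, Λ i' j) * |x i| := by
          refine mul_le_mul_of_nonneg_right ?_ (abs_nonneg _)
          exact Finset.single_le_sum (f := fun i' => ∑ j, Λ i' j)
            (fun i' _ => Finset.sum_nonneg fun j _ => hnn i' j) (Finset.mem_univ i)
  exact le_of_mul_le_mul_right hrow hxi

end Spectral

section Op
open scoped RealInnerProductSpace

lemma toEuclideanLin_apply' (A : Matrix (Fin r) (Fin r) ℝ) (x : EuclideanSpace ℝ (Fin r)) :
    Matrix.toEuclideanLin A x = toE (A *ᵥ (WithLp.equiv 2 _ x)) := rfl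

lemma inner_toE_toE (f g : Fin r → ℝ) : ⟪toE f, toE g⟫ = ∑ i, f i * g i := by
  simp [toE, PiLp.inner_apply, RCLike.inner_apply, mul_comm]

lemma norm_toE (f : Fin r → ℝ) : ‖toE f‖ = Real.sqrt (∑ i, f i ^ 2) := by
  rw [EuclideanSpace.norm_eq]
  congr 1
  refine Finset.sum_congr rfl fun i _ => ?_
  rw [Real.norm_eq_abs, sq_abs]
  rfl

lemma inner_expand (A : Matrix (Fin r) (Fin r) ℝ) (x : EuclideanSpace ℝ (Fin r)) :
    ⟪Matrix.toEuclideanLin A x, x⟫ = ∑ i, ∑ j, A i j * x j * x i := by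
  rw [toEuclideanLin_apply']
  have : x = toE (WithLp.equiv 2 _ x) := rfl
  nth_rewrite 2 [this]
  rw [inner_toE_toE]
  refine Finset.sum_congr rfl fun i _ => ?_
  rw [Matrix.mulVec, dotProduct, Finset.sum_mul]
  rfl

variable (hn : ∀ i, 0 < n i) (hsym : Λ.IsSymm) (hnn : ∀ i j, 0 ≤ Λ i j)

lemma opnorm_bound (hn : ∀ i, 0 < n i) (hsym : Λ.IsSymm) (hnn : ∀ i j, 0 ≤ Λ i j)
    (hr : 0 < r) (c : ℝ) (hmax : maxEig (mMat n Λ) ≤ c) :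
    0 ≤ c ∧ ∀ f : Fin r → ℝ, ‖toE (Λ *ᵥ f)‖ ≤ c * ‖toE f‖ := by
  classical
  have hH : Λ.IsHermitian := by
    rw [Matrix.IsHermitian]
    ext i j
    rw [Matrix.conjTranspose_apply, star_trivial]
    exact hsym.apply i j
  have hT : (Matrix.toEuclideanLin Λ).IsSymmetric :=
    Matrix.isHermitian_iff_isSymmetric.1 hH
  haveI : Nontrivial (EuclideanSpace ℝ (Fin r)) := by
    refine ⟨toE 0, toE (fun _ => 1), fun h => ?_⟩
    have h01 : (0:ℝ) = 1 := congrArg (fun v : EuclideanSpace ℝ (Fin r) => v ⟨0, hr⟩) h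
    norm_num at h01
  -- bounded above eigenvalue set
  set K : ℝ := ∑ i, ∑ j, Λ i j with hK
  have hbdd : BddAbove {t : ℝ | Module.End.HasEigenvalue (Matrix.toEuclideanLin Λ) t} := by
    refine ⟨K, fun t ht => ?_⟩
    exact (le_abs_self t).trans (eig_abs_le hnn t ((eig_eucl_iff Λ t).1 ht))
  have hmem_le : ∀ t : ℝ, Module.End.HasEigenvalue (Matrix.toEuclideanLin Λ) t → t ≤ c := by
    intro t ht
    refine le_trans ?_ hmax
    rw [maxEig]
    have hseteq : {t : ℝ | Module.End.HasEigenvalue (Matrix.toLin' (mMat n Λ)) t}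
        = {t : ℝ | Module.End.HasEigenvalue (Matrix.toEuclideanLin Λ) t} := by
      ext s
      rw [Set.mem_setOf_eq, Set.mem_setOf_eq, eig_mMat_iff hn, ← eig_eucl_iff]
    rw [hseteq]
    exact le_csSup hbdd ht
  -- Rayleigh quotient bounded
  set T' : EuclideanSpace ℝ (Fin r) →L[ℝ] EuclideanSpace ℝ (Fin r) :=
    LinearMap.toContinuousLinearMap (Matrix.toEuclideanLin Λ) with hT'
  have hbddRay : BddAbove (Set.range fun x : {x : EuclideanSpace ℝ (Fin r) // x ≠ 0} =>
      RCLike.re ⟪Matrix.toEuclideanLin Λ (x : EuclideanSpace ℝ (Fin r)), (x : EuclideanSpace ℝ (Fin r))⟫ / ‖(x : EuclideanSpace ℝ (Fin r))‖ ^ 2) := by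
    refine ⟨‖T'‖, ?_⟩
    rintro s ⟨x, rfl⟩
    have hx : (0:ℝ) < ‖(x : EuclideanSpace ℝ (Fin r))‖ := norm_pos_iff.2 x.2
    rw [div_le_iff₀ (by positivity)]
    calc RCLike.re ⟪Matrix.toEuclideanLin Λ (x : EuclideanSpace ℝ (Fin r)), (x : EuclideanSpace ℝ (Fin r))⟫
        = ⟪Matrix.toEuclideanLin Λ (x : EuclideanSpace ℝ (Fin r)), (x : EuclideanSpace ℝ (Fin r))⟫ := rfl
      _ ≤ ‖Matrix.toEuclideanLin Λ (x : EuclideanSpace ℝ (Fin r))‖ * ‖(x : EuclideanSpace ℝ (Fin r))‖ := real_inner_le_norm _ _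
      _ = ‖T' (x : EuclideanSpace ℝ (Fin r))‖ * ‖(x : EuclideanSpace ℝ (Fin r))‖ := rfl
      _ ≤ ‖T'‖ * ‖(x : EuclideanSpace ℝ (Fin r))‖ * ‖(x : EuclideanSpace ℝ (Fin r))‖ := by
          exact mul_le_mul_of_nonneg_right (T'.le_opNorm _) (norm_nonneg _)
      _ = ‖T'‖ * ‖(x : EuclideanSpace ℝ (Fin r))‖ ^ 2 := by ring
  set R : ℝ := ⨆ x : {x : EuclideanSpace ℝ (Fin r) // x ≠ 0},
      RCLike.re ⟪Matrix.toEuclideanLin Λ (x : EuclideanSpace ℝ (Fin r)), (x : EuclideanSpace ℝ (Fin r))⟫ / ‖(x : EuclideanSpace ℝ (Fin r))‖ ^ 2 with hRdef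
  have hReig : Module.End.HasEigenvalue (Matrix.toEuclideanLin Λ) R := by
    have := hT.hasEigenvalue_iSup_of_finiteDimensional
    exact this
  have hRc : R ≤ c := hmem_le R hReig
  have hRay : ∀ x : EuclideanSpace ℝ (Fin r), ⟪Matrix.toEuclideanLin Λ x, x⟫ ≤ R * ‖x‖ ^ 2 := by
    intro x
    by_cases hx : x = 0
    · subst hx; simp
    · have h1 : RCLike.re ⟪Matrix.toEuclideanLin Λ x, x⟫ / ‖x‖ ^ 2 ≤ R :=
        le_ciSup hbddRay ⟨x, hx⟩
      have hxn : (0:ℝ) < ‖x‖ ^ 2 := pow_pos (norm_pos_iff.2 hx) 2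
      have := (div_le_iff₀ hxn).1 h1
      calc ⟪Matrix.toEuclideanLin Λ x, x⟫ = RCLike.re ⟪Matrix.toEuclideanLin Λ x, x⟫ := rfl
        _ ≤ R * ‖x‖ ^ 2 := this
  -- c nonneg
  have hc0 : 0 ≤ c := by
    have hone : (toE (fun _ => 1) : EuclideanSpace ℝ (Fin r)) ≠ 0 := by
      intro h
      have h01 : (1:ℝ) = 0 := congrArg (fun v : EuclideanSpace ℝ (Fin r) => v ⟨0, hr⟩) h
      norm_num at h01
    have h2 : (0:ℝ) ≤ ⟪Matrix.toEuclideanLin Λ (toE fun _ => 1), toE fun _ => 1⟫ := by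
      rw [inner_expand]
      refine Finset.sum_nonneg fun i _ => Finset.sum_nonneg fun j _ => ?_
      have h1 : (toE (fun _ => (1:ℝ))) j = 1 := rfl
      have h2 : (toE (fun _ => (1:ℝ))) i = 1 := rfl
      simp [h1, h2, hnn i j]
    have h3 := hRay (toE fun _ => 1)
    have hn1 : (0:ℝ) < ‖(toE (fun _ => 1) : EuclideanSpace ℝ (Fin r))‖ ^ 2 :=
      pow_pos (norm_pos_iff.2 hone) 2
    nlinarith [hRc]
  -- eigenvalues of hH bounded in abs
  have habs : ∀ k, |hH.eigenvalues k| ≤ c := by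
    intro k
    set μ := hH.eigenvalues k with hμ
    set w : EuclideanSpace ℝ (Fin r) := hH.eigenvectorBasis k with hw
    have hwe : Λ *ᵥ ⇑w = μ • ⇑w := hH.mulVec_eigenvectorBasis k
    have hwne : w ≠ 0 := hH.eigenvectorBasis.orthonormal.ne_zero k
    have hwnorm : ‖w‖ = 1 := hH.eigenvectorBasis.orthonormal.1 k
    have hTw : Matrix.toEuclideanLin Λ w = μ • w := by
      apply (WithLp.equiv 2 _).injective
      funext i
      exact congrFun hwe i
    have hup : μ ≤ c := hmem_le μ ((hasEig_iff' _ μ).2 ⟨w, hTw, hwne⟩)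
    have hinner : ⟪Matrix.toEuclideanLin Λ w, w⟫ = μ := by
      rw [hTw, real_inner_smul_left, real_inner_self_eq_norm_sq, hwnorm]
      norm_num
    -- lower bound
    have hlow : -c ≤ μ := by
      set z : EuclideanSpace ℝ (Fin r) := toE (fun i => |w i|) with hz
      have hzn : ‖z‖ = ‖w‖ := by
        rw [hz, norm_toE, EuclideanSpace.norm_eq]
        congr 1
      have h1 : -μ ≤ ⟪Matrix.toEuclideanLin Λ z, z⟫ := by
        rw [inner_expand, ← hinner, inner_expand]
        have : -(∑ i, ∑ j, Λ i j * w j * w i) ≤ |∑ i, ∑ j, Λ i j * w j * w i| :=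
          neg_le_abs _
        refine this.trans ?_
        refine (Finset.abs_sum_le_sum_abs _ _).trans ?_
        refine Finset.sum_le_sum fun i _ => ?_
        refine (Finset.abs_sum_le_sum_abs _ _).trans ?_
        refine Finset.sum_le_sum fun j _ => ?_
        rw [abs_mul, abs_mul, abs_of_nonneg (hnn i j)]
        exact le_of_eq rfl
      have h2 : ⟪Matrix.toEuclideanLin Λ z, z⟫ ≤ c := by
        have h3 := hRay z
        rw [hzn, hwnorm] at h3
        norm_num at h3
        exact h3.trans hRc
      linarith
    rw [abs_le]; exact ⟨by linarith, hup⟩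
  -- operator norm bound via eigenbasis
  refine ⟨hc0, fun f => ?_⟩
  set b := hH.eigenvectorBasis with hb
  set x : EuclideanSpace ℝ (Fin r) := toE f with hx
  have happ : Matrix.toEuclideanLin Λ x = toE (Λ *ᵥ f) := rfl
  have hrepr : ∀ k, b.repr (Matrix.toEuclideanLin Λ x) k = hH.eigenvalues k * b.repr x k := by
    intro k
    rw [b.repr_apply_apply, b.repr_apply_apply]
    have hsymT := hT (b k) x
    rw [← hsymT]
    have hTbk : Matrix.toEuclideanLin Λ (b k) = hH.eigenvalues k • (b k) := by
      apply (WithLp.equiv 2 _).injective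
      funext i
      exact congrFun (hH.mulVec_eigenvectorBasis k) i
    rw [hTbk, real_inner_smul_left]
  have hnorm1 : ‖toE (Λ *ᵥ f)‖ = ‖b.repr (Matrix.toEuclideanLin Λ x)‖ := by
    rw [← happ]
    exact (b.repr.norm_map (Matrix.toEuclideanLin Λ x)).symm
  rw [hnorm1, EuclideanSpace.norm_eq]
  have hxn : ‖toE f‖ = ‖b.repr x‖ := (b.repr.norm_map x).symm
  rw [hxn, EuclideanSpace.norm_eq]
  have hsum : ∑ k, ‖b.repr (Matrix.toEuclideanLin Λ x) k‖ ^ 2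
      ≤ c ^ 2 * ∑ k, ‖b.repr x k‖ ^ 2 := by
    rw [Finset.mul_sum]
    refine Finset.sum_le_sum fun k _ => ?_
    rw [hrepr k]
    rw [Real.norm_eq_abs, Real.norm_eq_abs, abs_mul, mul_pow]
    refine mul_le_mul_of_nonneg_right ?_ (by positivity)
    have := habs k
    have h1 : |hH.eigenvalues k| ^ 2 ≤ c ^ 2 := by nlinarith [abs_nonneg (hH.eigenvalues k)]
    simpa [sq_abs] using h1
  calc Real.sqrt (∑ k, ‖b.repr (Matrix.toEuclideanLin Λ x) k‖ ^ 2)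
      ≤ Real.sqrt (c ^ 2 * ∑ k, ‖b.repr x k‖ ^ 2) := Real.sqrt_le_sqrt hsum
    _ = c * Real.sqrt (∑ k, ‖b.repr x k‖ ^ 2) := by
        rw [Real.sqrt_mul (by positivity), Real.sqrt_sq hc0]
end Op

lemma pMat_nonneg (hnn : ∀ i j, 0 ≤ Λ i j) (i j : Fin r) : 0 ≤ pMat n Λ i j :=
  div_nonneg (hnn i j) (Real.sqrt_nonneg _)

lemma mpow_one_nonneg (hnn : ∀ i j, 0 ≤ Λ i j) :
    ∀ (ℓ : ℕ) (i : Fin r), 0 ≤ ((mMat n Λ) ^ ℓ *ᵥ 1) i := by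
  intro ℓ
  induction ℓ with
  | zero => intro i; simp [Matrix.one_mulVec]
  | succ ℓ ih =>
    intro i
    rw [pow_succ' (mMat n Λ) ℓ, ← Matrix.mulVec_mulVec, Matrix.mulVec, dotProduct]
    refine Finset.sum_nonneg fun j _ => mul_nonneg ?_ (ih j)
    exact mul_nonneg (pMat_nonneg hnn i j) (Nat.cast_nonneg _)

lemma pow_norm_bound (hn : ∀ i, 0 < n i) (hsym : Λ.IsSymm) (hnn : ∀ i j, 0 ≤ Λ i j)
    (hr : 0 < r) (c : ℝ) (hmax : maxEig (mMat n Λ) ≤ c) :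
    ∀ (ℓ : ℕ) (f : Fin r → ℝ), ‖toE (Λ ^ ℓ *ᵥ f)‖ ≤ c ^ ℓ * ‖toE f‖ := by
  obtain ⟨hc0, hop⟩ := opnorm_bound hn hsym hnn hr c hmax
  intro ℓ
  induction ℓ with
  | zero => intro f; simp [Matrix.one_mulVec]
  | succ ℓ ih =>
    intro f
    rw [pow_succ (Λ) ℓ, ← Matrix.mulVec_mulVec]
    calc ‖toE (Λ ^ ℓ *ᵥ (Λ *ᵥ f))‖ ≤ c ^ ℓ * ‖toE (Λ *ᵥ f)‖ := ih _
      _ ≤ c ^ ℓ * (c * ‖toE f‖) :=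
          mul_le_mul_of_nonneg_left (hop f) (pow_nonneg hc0 ℓ)
      _ = c ^ (ℓ+1) * ‖toE f‖ := by ring

lemma weighted_bound (hn : ∀ i, 0 < n i) (hsym : Λ.IsSymm) (hnn : ∀ i j, 0 ≤ Λ i j)
    (hr : 0 < r) (c : ℝ) (hmax : maxEig (mMat n Λ) ≤ c) (ℓ : ℕ) :
    ∑ i, (n i : ℝ) * ((mMat n Λ) ^ ℓ *ᵥ 1) i ≤ c ^ ℓ * ∑ i, (n i : ℝ) := by
  obtain ⟨hc0, -⟩ := opnorm_bound hn hsym hnn hr c hmax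
  set y : Fin r → ℝ := fun j => Real.sqrt (n j) with hy
  have hstep : ∑ i, (n i : ℝ) * ((mMat n Λ) ^ ℓ *ᵥ 1) i = ∑ i, y i * (Λ ^ ℓ *ᵥ y) i := by
    refine Finset.sum_congr rfl fun i _ => ?_
    rw [mMat_pow_one hn ℓ i]
    have hsi : (0:ℝ) < Real.sqrt (n i) := Real.sqrt_pos.2 (by exact_mod_cast hn i)
    have : (n i : ℝ) = Real.sqrt (n i) * Real.sqrt (n i) :=
      (Real.mul_self_sqrt (by positivity)).symm
    field_simp [hy]
    nth_rewrite 1 [this]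
    ring
  rw [hstep]
  have hinner : ∑ i, y i * (Λ ^ ℓ *ᵥ y) i = ⟪toE y, toE (Λ ^ ℓ *ᵥ y)⟫ :=
    (inner_toE_toE y _).symm
  rw [hinner]
  have hny : ‖toE y‖ = Real.sqrt (∑ i, (n i : ℝ)) := by
    rw [norm_toE]
    congr 1
    refine Finset.sum_congr rfl fun i _ => ?_
    rw [hy, Real.sq_sqrt (by positivity)]
  calc ⟪toE y, toE (Λ ^ ℓ *ᵥ y)⟫ ≤ ‖toE y‖ * ‖toE (Λ ^ ℓ *ᵥ y)‖ := real_inner_le_norm _ _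
    _ ≤ ‖toE y‖ * (c ^ ℓ * ‖toE y‖) :=
        mul_le_mul_of_nonneg_left (pow_norm_bound hn hsym hnn hr c hmax ℓ y) (norm_nonneg _)
    _ = c ^ ℓ * (‖toE y‖ * ‖toE y‖) := by ring
    _ = c ^ ℓ * ∑ i, (n i : ℝ) := by
        rw [hny, Real.mul_self_sqrt (by positivity)]

end Aux

lemma geom_le {c : ℝ} (h0 : 0 ≤ c) (h1 : c < 1) (m : ℕ) :
    ∑ ℓ ∈ Finset.range m, c ^ ℓ ≤ (1 - c)⁻¹ := by
  have h2 : (0:ℝ) < 1 - c := by linarith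
  have key : (c ^ m - 1) / (c - 1) = (1 - c ^ m) / (1 - c) := by
    rw [show (1 - c ^ m) = -(c ^ m - 1) by ring, show (1 - c) = -(c - 1) by ring,
      neg_div_neg_eq]
  rw [geom_sum_eq (ne_of_lt h1) m, key, div_le_iff₀ h2, inv_mul_cancel₀ h2.ne']
  have h3 : 0 ≤ c ^ m := pow_nonneg h0 m
  linarith

/-- in the sub-critical case `ρ(M) ≤ 1 - ε`, with probability at least
`1 - η` every connected component has at most `η·n` vertices. -/
theorem subcritical_small_components (r A : ℕ) (ε η : ℝ) (hε : 0 < ε) (hη : 0 < η) :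
    ∃ N : ℕ, ∀ (n : Fin r → ℕ) (Λ : Matrix (Fin r) (Fin r) ℝ),
      (∀ i, 0 < n i) → Λ.IsSymm → (∀ i j, 0 ≤ Λ i j) →
      (∀ i j, pMat n Λ i j ≤ 1) →
      N ≤ ∑ i, n i → Balanced A n → ConnectedTypes Λ → Separated ε Λ →
      maxEig (mMat n Λ) ≤ 1 - ε →
      ENNReal.ofReal (1 - η) ≤
        graphMeasure n (pMat n Λ)
          {ω | ∀ v : Vert n, (compSize ω v : ℝ) ≤ η * ((∑ i, n i : ℕ) : ℝ)} := by
  classical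
  refine ⟨⌈(ε * η ^ 3)⁻¹⌉₊ + 1, ?_⟩
  intro n Λ hn hsym hnn hple hNn hbal hconn hsep hmax
  set ntot : ℕ := ∑ i, n i with hntot
  have hr : 0 < r := by
    have : Nonempty (Fin r) := hconn.nonempty
    exact Fin.pos_iff_nonempty.2 this
  have hntot_pos : 0 < ntot := by
    refine Finset.sum_pos (fun i _ => hn i) ?_
    exact ⟨⟨0, hr⟩, Finset.mem_univ _⟩
  have hNreal : (ε * η ^ 3)⁻¹ ≤ (ntot : ℝ) := by
    refine (Nat.le_ceil _).trans ?_
    have : (⌈(ε * η ^ 3)⁻¹⌉₊ : ℝ) ≤ (ntot : ℝ) := by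
      exact_mod_cast le_trans (Nat.le_succ _) hNn
    exact this
  set p : Fin r → Fin r → ℝ := fun i j => pMat n Λ i j with hp
  have hp_nonneg : ∀ i j, 0 ≤ p i j := fun i j => pMat_nonneg hnn i j
  have hp_symm : ∀ i j, p i j = p j i := by
    intro i j
    show pMat n Λ i j = pMat n Λ j i
    unfold pMat
    rw [hsym.apply i j, mul_comm]
  set μ := graphMeasure n p with hμ
  haveI : IsProbabilityMeasure μ := by rw [hμ]; infer_instance
  have hcard : Fintype.card (Vert n) = ntot := by
    rw [Fintype.card_sigma]
    simp [hntot]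
  set c : ℝ := 1 - ε with hc
  have hc0 : 0 ≤ c := (opnorm_bound hn hsym hnn hr c hmax).1
  have hc1 : c < 1 := by rw [hc]; linarith
  -- expectation bound per starting vertex
  have hreach : ∀ v : Vert n, ∑ u : Vert n, μ {ω | (graphOf ω).Reachable v u}
      ≤ ∑ ℓ ∈ Finset.range ntot, ENNReal.ofReal (((mMat n Λ) ^ ℓ *ᵥ 1) v.1) := by
    intro v
    calc ∑ u : Vert n, μ {ω | (graphOf ω).Reachable v u}
        ≤ ∑ u : Vert n, ∑ ℓ ∈ Finset.range (Fintype.card (Vert n)), ∑ g : Fin ℓ → Vert n,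
            (if (v :: List.ofFn g).getLast? = some u
             then ENNReal.ofReal (wt p v (List.ofFn g)) else 0) :=
          Finset.sum_le_sum fun u _ => measure_reach_le hp_nonneg hp_symm v u
      _ = ∑ ℓ ∈ Finset.range (Fintype.card (Vert n)), ∑ g : Fin ℓ → Vert n, ∑ u : Vert n,
            (if (v :: List.ofFn g).getLast? = some u
             then ENNReal.ofReal (wt p v (List.ofFn g)) else 0) := by
          rw [Finset.sum_comm]
          exact Finset.sum_congr rfl fun ℓ _ => Finset.sum_comm
      _ = ∑ ℓ ∈ Finset.range (Fintype.card (Vert n)), ∑ g : Fin ℓ → Vert n,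
            ENNReal.ofReal (wt p v (List.ofFn g)) := by
          refine Finset.sum_congr rfl fun ℓ _ => Finset.sum_congr rfl fun g _ => ?_
          have hne : (v :: List.ofFn g) ≠ [] := List.cons_ne_nil _ _
          have hiff : ∀ u : Vert n, ((v :: List.ofFn g).getLast? = some u)
              ↔ u = (v :: List.ofFn g).getLast hne := by
            intro u
            rw [List.getLast?_eq_getLast hne]
            exact ⟨fun h => (Option.some_inj.1 h).symm, fun h => by rw [h]⟩
          simp_rw [hiff]
          rw [Finset.sum_ite_eq' Finset.univ ((v :: List.ofFn g).getLast hne)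
            (fun _ => ENNReal.ofReal (wt p v (List.ofFn g)))]
          simp
      _ = ∑ ℓ ∈ Finset.range ntot, ENNReal.ofReal (((mMat n Λ) ^ ℓ *ᵥ 1) v.1) := by
          rw [hcard]
          refine Finset.sum_congr rfl fun ℓ _ => ?_
          rw [← ENNReal.ofReal_sum_of_nonneg (fun g _ => wt_nonneg hp_nonneg v _)]
          congr 1
          exact sum_wt ℓ v
  -- the random variable
  set F : (Sym2 (Vert n) → Bool) → ENNReal := fun ω => ∑ v : Vert n, ∑ u : Vert n,
      (if (graphOf ω).Reachable v u then (1:ENNReal) else 0) with hF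
  have hmeasAll : ∀ {β : Type} [MeasurableSpace β] (f : (Sym2 (Vert n) → Bool) → β),
      Measurable f := fun f s _ => measurableSet_all _
  have hFcomp : ∀ ω (v : Vert n), (compSize ω v : ℝ≥0∞)
      = ∑ u : Vert n, (if (graphOf ω).Reachable v u then (1:ℝ≥0∞) else 0) := by
    intro ω v
    have h1 : compSize ω v = (Finset.univ.filter fun u => (graphOf ω).Reachable v u).card := by
      rw [compSize, Set.ncard_eq_toFinset_card']
      congr 1
      ext u
      simp
    rw [h1, Finset.card_filter]
    push_cast
    refine Finset.sum_congr rfl fun u _ => ?_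
    split <;> simp
  have hint : ∫⁻ ω, F ω ∂μ = ∑ v : Vert n, ∑ u : Vert n,
      μ {ω | (graphOf ω).Reachable v u} := by
    rw [lintegral_finset_sum _ (fun v _ => hmeasAll _)]
    refine Finset.sum_congr rfl fun v _ => ?_
    rw [lintegral_finset_sum _ (fun u _ => hmeasAll _)]
    refine Finset.sum_congr rfl fun u _ => ?_
    calc ∫⁻ ω, (if (graphOf ω).Reachable v u then (1:ℝ≥0∞) else 0) ∂μ
        = ∫⁻ ω, Set.indicator {ω' | (graphOf ω').Reachable v u} (fun _ => 1) ω ∂μ := by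
          congr 1
          funext ω
          rw [Set.indicator_apply]
          rfl
      _ = μ {ω | (graphOf ω).Reachable v u} := lintegral_indicator_one (measurableSet_all _)
  -- integral bound
  have hintle : ∫⁻ ω, F ω ∂μ ≤ ENNReal.ofReal (ε⁻¹ * ntot) := by
    rw [hint]
    calc ∑ v : Vert n, ∑ u : Vert n, μ {ω | (graphOf ω).Reachable v u}
        ≤ ∑ v : Vert n, ∑ ℓ ∈ Finset.range ntot,
            ENNReal.ofReal (((mMat n Λ) ^ ℓ *ᵥ 1) v.1) :=
          Finset.sum_le_sum fun v _ => hreach v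
      _ = ∑ ℓ ∈ Finset.range ntot, ∑ v : Vert n,
            ENNReal.ofReal (((mMat n Λ) ^ ℓ *ᵥ 1) v.1) := Finset.sum_comm
      _ = ∑ ℓ ∈ Finset.range ntot,
            ENNReal.ofReal (∑ i, (n i : ℝ) * ((mMat n Λ) ^ ℓ *ᵥ 1) i) := by
          refine Finset.sum_congr rfl fun ℓ _ => ?_
          rw [← Finset.univ_sigma_univ, Finset.sum_sigma]
          rw [ENNReal.ofReal_sum_of_nonneg (fun i _ =>
            mul_nonneg (Nat.cast_nonneg _) (mpow_one_nonneg hnn ℓ i))]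
          refine Finset.sum_congr rfl fun i _ => ?_
          show ∑ _s : Fin (n i), ENNReal.ofReal (((mMat n Λ) ^ ℓ *ᵥ 1) i) = _
          rw [Finset.sum_const, nsmul_eq_mul]
          simp only [Finset.card_univ, Fintype.card_fin]
          rw [← ENNReal.ofReal_natCast (n i), ← ENNReal.ofReal_mul (Nat.cast_nonneg _)]
      _ ≤ ∑ ℓ ∈ Finset.range ntot, ENNReal.ofReal (c ^ ℓ * ntot) := by
          refine Finset.sum_le_sum fun ℓ _ => ENNReal.ofReal_le_ofReal ?_
          have hcast : ((ntot : ℕ) : ℝ) = ∑ i, (n i : ℝ) := by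
            rw [hntot]; push_cast; rfl
          rw [hcast]
          exact weighted_bound hn hsym hnn hr c hmax ℓ
      _ ≤ ENNReal.ofReal (ε⁻¹ * ntot) := by
          rw [← ENNReal.ofReal_sum_of_nonneg (fun ℓ _ =>
            mul_nonneg (pow_nonneg hc0 ℓ) (Nat.cast_nonneg _))]
          refine ENNReal.ofReal_le_ofReal ?_
          rw [← Finset.sum_mul]
          refine mul_le_mul_of_nonneg_right ?_ (Nat.cast_nonneg _)
          have := geom_le hc0 hc1 ntot
          rw [hc] at this
          simpa using this
  -- Markov
  set a : ℝ≥0∞ := ENNReal.ofReal ((η * ntot) ^ 2) with ha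
  set good : Set (Sym2 (Vert n) → Bool) :=
    {ω | ∀ v : Vert n, (compSize ω v : ℝ) ≤ η * ((ntot : ℕ) : ℝ)} with hgood
  have hbadsub : goodᶜ ⊆ {ω | a ≤ F ω} := by
    intro ω hω
    simp only [hgood, Set.mem_compl_iff, Set.mem_setOf_eq, not_forall] at hω
    obtain ⟨v0, hv0⟩ := hω
    push_neg at hv0
    set k : ℕ := compSize ω v0 with hk
    have hkpos : η * (ntot : ℝ) < k := hv0
    -- all vertices in the component of v0 have the same compSize
    set C : Finset (Vert n) := Finset.univ.filter fun u => (graphOf ω).Reachable v0 u with hC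
    have hCcard : C.card = k := by
      rw [hk, compSize, Set.ncard_eq_toFinset_card']
      congr 1
      ext u
      simp [hC]
    have hsame : ∀ v ∈ C, compSize ω v = k := by
      intro v hv
      rw [hC, Finset.mem_filter] at hv
      have hvreach : (graphOf ω).Reachable v0 v := hv.2
      rw [hk, compSize, compSize]
      congr 1
      ext u
      exact ⟨fun h => hvreach.trans h, fun h => hvreach.symm.trans h⟩
    show a ≤ F ω
    have hsum : ((k * k : ℕ) : ℝ≥0∞) ≤ F ω := by
      rw [hF]
      simp only []
      calc ((k * k : ℕ) : ℝ≥0∞) = ∑ v ∈ C, (k : ℝ≥0∞) := by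
            rw [Finset.sum_const, hCcard]
            push_cast
            rw [nsmul_eq_mul]
        _ = ∑ v ∈ C, (compSize ω v : ℝ≥0∞) := by
            refine Finset.sum_congr rfl fun v hv => ?_
            rw [hsame v hv]
        _ ≤ ∑ v : Vert n, (compSize ω v : ℝ≥0∞) :=
            Finset.sum_le_sum_of_subset (Finset.subset_univ C)
        _ = ∑ v : Vert n, ∑ u : Vert n,
              (if (graphOf ω).Reachable v u then (1:ℝ≥0∞) else 0) :=
            Finset.sum_congr rfl fun v _ => hFcomp ω v
    refine le_trans ?_ hsum
    rw [ha]
    have h1 : ((η * ntot) ^ 2 : ℝ) ≤ ((k * k : ℕ) : ℝ) := by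
      push_cast
      have h0 : (0:ℝ) ≤ η * ntot := by positivity
      nlinarith
    calc ENNReal.ofReal ((η * ntot) ^ 2) ≤ ENNReal.ofReal ((k * k : ℕ) : ℝ) :=
          ENNReal.ofReal_le_ofReal h1
      _ = ((k * k : ℕ) : ℝ≥0∞) := ENNReal.ofReal_natCast _
  have hmark : a * μ goodᶜ ≤ ∫⁻ ω, F ω ∂μ := by
    refine le_trans ?_ (mul_meas_ge_le_lintegral₀ (hmeasAll F).aemeasurable a)
    exact mul_le_mul_right (measure_mono hbadsub) a
  -- conclude
  have ha0 : a ≠ 0 := by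
    rw [ha]
    simp only [ne_eq, ENNReal.ofReal_eq_zero, not_le]
    have : (0:ℝ) < (ntot : ℝ) := by exact_mod_cast hntot_pos
    positivity
  have hatop : a ≠ ⊤ := ENNReal.ofReal_ne_top
  have hfinal : ε⁻¹ * (ntot : ℝ) ≤ (η * ntot) ^ 2 * η := by
    have hnt : (0:ℝ) < (ntot : ℝ) := by exact_mod_cast hntot_pos
    have hεη : (0:ℝ) < ε * η ^ 3 := by positivity
    have h2 : (1:ℝ) ≤ (ε * η ^ 3) * ntot := by
      have h3 := mul_le_mul_of_nonneg_left hNreal hεη.le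
      rwa [mul_inv_cancel₀ hεη.ne'] at h3
    have h4 : ε⁻¹ * ntot ≤ (η ^ 3 * ntot) * ntot := by
      rw [inv_mul_le_iff₀ hε]
      nlinarith [mul_le_mul_of_nonneg_right h2 hnt.le]
    calc ε⁻¹ * (ntot:ℝ) ≤ (η ^ 3 * ntot) * ntot := h4
      _ = (η * ntot) ^ 2 * η := by ring
  have hmu_bad : μ goodᶜ ≤ ENNReal.ofReal η := by
    have h1 : a * μ goodᶜ ≤ a * ENNReal.ofReal η := by
      refine hmark.trans (hintle.trans ?_)
      rw [ha, ← ENNReal.ofReal_mul (by positivity)]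
      exact ENNReal.ofReal_le_ofReal hfinal
    exact (ENNReal.mul_le_mul_iff_right ha0 hatop).1 h1
  have hcompl : μ good = 1 - μ goodᶜ := by
    have := measure_compl (measurableSet_all good) (measure_ne_top μ good)
    rw [measure_univ] at this
    have h2 : μ goodᶜ = 1 - μ good := this
    rw [h2]
    rw [ENNReal.sub_sub_cancel (by norm_num) prob_le_one]
  show ENNReal.ofReal (1 - η) ≤ μ good
  rw [hcompl]
  calc ENNReal.ofReal (1 - η) = 1 - ENNReal.ofReal η := by
        rw [ENNReal.ofReal_sub 1 hη.le, ENNReal.ofReal_one]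
      _ ≤ 1 - μ goodᶜ := tsub_le_tsub_left hmu_bad 1
end Pandemic
end

section
/- Let Λ be an r×r symmetric matrix with nonnegative entries that is connected and ε-separated (with 0 < ε ≤ 1). Then there exists a unit ℓ²-norm eigenvector y_1 of Λ with eigenvalue equal to the largest eigenvalue ρ(Λ), all of whose entries are nonnegative and satisfy y_1(j) ≥ ε^{2r}/(√r · r^r) for every j ∈ [r]. -/
open MeasureTheory Matrix

namespace Pandemic

variable {r : ℕ}

open Metric in
theorem aux_exists_nonneg_max_eigvec (r : ℕ) (hr : 0 < r)
    (Λ : Matrix (Fin r) (Fin r) ℝ) (hsymm : Λ.IsSymm) (hnonneg : ∀ i j, 0 ≤ Λ i j) :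
    ∃ y : Fin r → ℝ, (∑ i, y i ^ 2 = 1) ∧ (∀ i, 0 ≤ y i) ∧
      Λ.mulVec y = maxEig Λ • y := by
  haveI : Nonempty (Fin r) := ⟨⟨0, hr⟩⟩
  set T : EuclideanSpace ℝ (Fin r) →L[ℝ] EuclideanSpace ℝ (Fin r) := LinearMap.toContinuousLinearMap (Matrix.toEuclideanLin Λ) with hT
  have hTapp : ∀ (x : EuclideanSpace ℝ (Fin r)) (i : Fin r), T x i = Λ.mulVec (fun j => x j) i := by
    intro x i
    rfl
  have hfapp : ∀ x : EuclideanSpace ℝ (Fin r), T.reApplyInnerSelf x = ∑ i, (T x) i * x i := by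
    intro x
    rw [ContinuousLinearMap.reApplyInnerSelf_apply]
    simp [PiLp.inner_apply, RCLike.inner_apply]
    exact Finset.sum_congr rfl fun i _ => mul_comm _ _
  have hnorm : ∀ x : EuclideanSpace ℝ (Fin r), ‖x‖ = Real.sqrt (∑ i, x i ^ 2) := by
    intro x; rw [EuclideanSpace.norm_eq]; simp [Real.norm_eq_abs, sq_abs]
  have hsa : IsSelfAdjoint T := by
    rw [ContinuousLinearMap.isSelfAdjoint_iff_isSymmetric]
    have : (T : EuclideanSpace ℝ (Fin r) →ₗ[ℝ] EuclideanSpace ℝ (Fin r)) = Matrix.toEuclideanLin Λ := by simp [hT]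
    rw [this]
    exact Matrix.isHermitian_iff_isSymmetric.mp hsymm
  obtain ⟨x₀, hx₀s, hmax⟩ := (isCompact_sphere (0:EuclideanSpace ℝ (Fin r)) 1).exists_isMaxOn
    (NormedSpace.sphere_nonempty.mpr zero_le_one) T.reApplyInnerSelf_continuous.continuousOn
  have hx₀n : ‖x₀‖ = 1 := mem_sphere_zero_iff_norm.mp hx₀s
  -- the entrywise absolute value
  set y : EuclideanSpace ℝ (Fin r) := (WithLp.equiv 2 (Fin r → ℝ)).symm (fun i => |x₀ i|) with hy
  have hyi : ∀ i, y i = |x₀ i| := fun i => rfl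
  have hyn : ‖y‖ = 1 := by
    rw [hnorm, ← hx₀n, hnorm]
    congr 1
    exact Finset.sum_congr rfl fun i _ => by rw [hyi, sq_abs]
  have hys : y ∈ sphere (0:EuclideanSpace ℝ (Fin r)) 1 := mem_sphere_zero_iff_norm.mpr hyn
  have hy0 : y ≠ 0 := by
    intro h; rw [h] at hyn; simp at hyn
  -- value at y dominates value at x₀
  have hval : T.reApplyInnerSelf x₀ ≤ T.reApplyInnerSelf y := by
    rw [hfapp, hfapp]
    have : ∀ x : EuclideanSpace ℝ (Fin r), ∑ i, (T x) i * x i = ∑ i, ∑ j, Λ i j * x j * x i := by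
      intro x
      refine Finset.sum_congr rfl fun i _ => ?_
      rw [hTapp, Matrix.mulVec, dotProduct, Finset.sum_mul]
    rw [this, this]
    refine Finset.sum_le_sum fun i _ => Finset.sum_le_sum fun j _ => ?_
    rw [hyi, hyi]
    calc Λ i j * x₀ j * x₀ i ≤ |Λ i j * x₀ j * x₀ i| := le_abs_self _
      _ = Λ i j * |x₀ j| * |x₀ i| := by
          rw [abs_mul, abs_mul, abs_of_nonneg (hnonneg i j)]
  have hmaxy : IsMaxOn T.reApplyInnerSelf (sphere (0:EuclideanSpace ℝ (Fin r)) ‖y‖) y := by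
    rw [hyn]
    intro z hz
    exact le_trans (hmax hz) hval
  have hev := hsa.hasEigenvector_of_isLocalExtrOn hy0 (Or.inr hmaxy.localize)
  set μ : ℝ := T.rayleighQuotient y with hμ
  have hTy : T y = μ • y := Module.End.mem_eigenspace_iff.mp hev.1
  have hμval : μ = T.reApplyInnerSelf y := by
    rw [hμ, ContinuousLinearMap.rayleighQuotient, hyn]; simp
  -- the vector in plain coordinates
  set v : Fin r → ℝ := fun i => |x₀ i| with hv
  have hvy : ∀ i, y i = v i := fun i => rfl
  have hveig : Λ.mulVec v = μ • v := by
    funext i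
    have := congrFun (congrArg (fun (z : EuclideanSpace ℝ (Fin r)) => (fun j => z j)) hTy) i
    simp only [hTapp] at this
    calc Λ.mulVec v i = T y i := (hTapp y i).symm
      _ = (μ • y) i := by rw [hTy]
      _ = μ • v i := rfl
  -- μ is the largest eigenvalue
  have hgreatest : IsGreatest {t : ℝ | Module.End.HasEigenvalue (Matrix.toLin' Λ) t} μ := by
    constructor
    · have : Module.End.HasEigenvector (Matrix.toLin' Λ) μ v := by
        refine ⟨Module.End.mem_eigenspace_iff.mpr ?_, ?_⟩
        · rw [Matrix.toLin'_apply]; exact hveig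
        · intro h
          apply hy0
          have : ∀ i, y i = 0 := fun i => by rw [hvy, h]; rfl
          exact PiLp.ext this
      exact Module.End.hasEigenvalue_of_hasEigenvector this
    · rintro t ht
      obtain ⟨w, hw⟩ := ht.exists_hasEigenvector
      have hweq : Λ.mulVec w = t • w := by
        rw [← Matrix.toLin'_apply Λ w]; exact hw.apply_eq_smul
      set W : EuclideanSpace ℝ (Fin r) := (WithLp.equiv 2 (Fin r → ℝ)).symm w with hW
      have hW0 : W ≠ 0 := by
        intro h
        apply hw.2
        funext i
        exact congrFun (congrArg (fun (z : EuclideanSpace ℝ (Fin r)) => (fun j => z j)) h) i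
      have hTW : T W = t • W := by
        apply PiLp.ext
        intro i
        rw [hTapp]
        show Λ.mulVec w i = (t • W) i
        rw [hweq]; rfl
      have hWn : 0 < ‖W‖ := norm_pos_iff.mpr hW0
      set u : EuclideanSpace ℝ (Fin r) := ‖W‖⁻¹ • W with hu
      have hun : ‖u‖ = 1 := by
        rw [hu, norm_smul, norm_inv, norm_norm, inv_mul_cancel₀ hWn.ne']
      have hus : u ∈ sphere (0:EuclideanSpace ℝ (Fin r)) 1 := mem_sphere_zero_iff_norm.mpr hun
      have hfu : T.reApplyInnerSelf u = t := by
        rw [hu, ContinuousLinearMap.reApplyInnerSelf_smul,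
          ContinuousLinearMap.reApplyInnerSelf_apply, hTW, inner_smul_left]
        simp only [RCLike.star_def, starRingEnd_apply, star_trivial, real_inner_self_eq_norm_sq]
        rw [Real.norm_eq_abs, abs_inv, abs_norm]
        field_simp
        exact RCLike.re_to_real
      calc t = T.reApplyInnerSelf u := hfu.symm
        _ ≤ T.reApplyInnerSelf x₀ := hmax hus
        _ ≤ T.reApplyInnerSelf y := hval
        _ = μ := hμval.symm
  have hmaxeig : maxEig Λ = μ := hgreatest.csSup_eq
  refine ⟨v, ?_, fun i => abs_nonneg _, by rw [hmaxeig]; exact hveig⟩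
  have h1 := hnorm y
  rw [hyn] at h1
  exact (Real.sqrt_eq_one.mp h1.symm)

theorem aux_lower_bound (r : ℕ) (hr : 0 < r) (ε : ℝ) (hε : 0 < ε) (hε1 : ε ≤ 1)
    (Λ : Matrix (Fin r) (Fin r) ℝ) (hsymm : Λ.IsSymm)
    (hnonneg : ∀ i j, 0 ≤ Λ i j) (hconn : (typeGraph Λ).Connected) (hsep : Separated ε Λ)
    (μ : ℝ) (y : Fin r → ℝ) (hy : ∀ i, 0 ≤ y i) (hsum : ∑ i, y i ^ 2 = 1)
    (heig : Λ.mulVec y = μ • y) :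
    ∀ j, ε ^ (2 * r) / (Real.sqrt r * (r : ℝ) ^ r) ≤ y j := by
  haveI : Nonempty (Fin r) := ⟨⟨0, hr⟩⟩
  have hrR : (0:ℝ) < r := by exact_mod_cast hr
  -- entry bounds
  have hub : ∀ i j, Λ i j ≤ 1 / ε := by
    intro i j
    rcases hsep i j with h | h
    · rw [h]; positivity
    · exact h.2
  -- max entry of the eigenvector
  obtain ⟨i0, -, hi0⟩ := Finset.exists_max_image Finset.univ y ⟨⟨0, hr⟩, Finset.mem_univ _⟩
  have hi0' : ∀ i, y i ≤ y i0 := fun i => hi0 i (Finset.mem_univ i)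
  have hi0sq : 1 ≤ r * y i0 ^ 2 := by
    calc (1:ℝ) = ∑ i, y i ^ 2 := hsum.symm
      _ ≤ ∑ _i : Fin r, y i0 ^ 2 := Finset.sum_le_sum fun i _ =>
          pow_le_pow_left₀ (hy i) (hi0' i) 2
      _ = r * y i0 ^ 2 := by rw [Finset.sum_const, Finset.card_univ, Fintype.card_fin,
          nsmul_eq_mul]
  have hi0pos : 0 < y i0 := by
    rcases (hy i0).lt_or_eq with h | h
    · exact h
    · exfalso; rw [← h] at hi0sq; norm_num at hi0sq
  have hi0lb : 1 / Real.sqrt r ≤ y i0 := by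
    have h : (↑r)⁻¹ ≤ y i0 ^ 2 := by
      rw [inv_eq_one_div, div_le_iff₀ hrR]; linarith
    calc 1 / Real.sqrt r = Real.sqrt (↑r)⁻¹ := by rw [one_div, Real.sqrt_inv]
      _ ≤ Real.sqrt (y i0 ^ 2) := Real.sqrt_le_sqrt h
      _ = y i0 := Real.sqrt_sq (hy i0)
  -- μ is between 0 and r/ε
  have hμi0 : μ * y i0 = ∑ k, Λ i0 k * y k := by
    have := congrFun heig i0
    simp only [Pi.smul_apply, smul_eq_mul] at this
    rw [← this, Matrix.mulVec, dotProduct]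
  have hμ0 : 0 ≤ μ := by
    have h1 : 0 ≤ ∑ k, Λ i0 k * y k :=
      Finset.sum_nonneg fun k _ => mul_nonneg (hnonneg i0 k) (hy k)
    nlinarith
  have hμub : μ ≤ r / ε := by
    have h1 : ∑ k, Λ i0 k * y k ≤ r / ε * y i0 := by
      calc ∑ k, Λ i0 k * y k ≤ ∑ _k : Fin r, 1 / ε * y i0 :=
          Finset.sum_le_sum fun k _ =>
            mul_le_mul (hub i0 k) (hi0' k) (hy k) (by positivity)
        _ = r * (1 / ε * y i0) := by
            rw [Finset.sum_const, Finset.card_univ, Fintype.card_fin, nsmul_eq_mul]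
        _ = r / ε * y i0 := by ring
    have h2 : μ * y i0 ≤ ↑r / ε * y i0 := by rw [hμi0]; exact h1
    exact le_of_mul_le_mul_right h2 hi0pos
  -- one adjacency step
  have hstep : ∀ a b, (typeGraph Λ).Adj a b → 0 < y a →
      ε ^ 2 / r * y a ≤ y b ∧ 0 < y b := by
    intro a b hab hya
    have hΛba : ε ≤ Λ b a := by
      have hpos : 0 < Λ b a := by
        rcases hab.2 with h | h
        · have h' : Λ a b = Λ b a := hsymm.apply b a
          rwa [h'] at h
        · exact h
      rcases hsep b a with h | h
      · rw [h] at hpos; exact absurd hpos (lt_irrefl 0)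
      · exact h.1
    have hμb : μ * y b = ∑ k, Λ b k * y k := by
      have := congrFun heig b
      simp only [Pi.smul_apply, smul_eq_mul] at this
      rw [← this, Matrix.mulVec, dotProduct]
    have hge : ε * y a ≤ μ * y b := by
      rw [hμb]
      calc ε * y a ≤ Λ b a * y a := mul_le_mul_of_nonneg_right hΛba (hy a)
        _ ≤ ∑ k, Λ b k * y k := Finset.single_le_sum
            (fun k _ => mul_nonneg (hnonneg b k) (hy k)) (Finset.mem_univ a)
    have hμpos : 0 < μ := by
      rcases lt_or_eq_of_le hμ0 with h | h
      · exact h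
      · exfalso; rw [← h] at hge; nlinarith
    have hyb : 0 < y b := by
      by_contra hcon
      push_neg at hcon
      have h3 : μ * y b ≤ 0 := mul_nonpos_of_nonneg_of_nonpos hμpos.le hcon
      nlinarith [mul_pos hε hya]
    constructor
    · -- y b ≥ ε * y a / μ ≥ ε^2/r * y a
      have h2 : ε * y a ≤ (r / ε) * y b := by
        calc ε * y a ≤ μ * y b := hge
          _ ≤ (r / ε) * y b := mul_le_mul_of_nonneg_right hμub hyb.le
      rw [div_mul_eq_mul_div, div_le_iff₀ hrR]
      calc ε ^ 2 * y a = ε * (ε * y a) := by ring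
        _ ≤ ε * ((r / ε) * y b) := mul_le_mul_of_nonneg_left h2 hε.le
        _ = y b * r := by field_simp
    · exact hyb
  -- walk induction
  have hwalk : ∀ (a j : Fin r) (w : (typeGraph Λ).Walk a j), 0 < y a →
      (ε ^ 2 / r) ^ w.length * y a ≤ y j := by
    intro a0 j0 w
    induction w with
    | nil => intro h; simp
    | @cons a b c hab w ih =>
      intro hya
      obtain ⟨h1, h2⟩ := hstep _ _ hab hya
      have h3 := ih h2
      calc (ε ^ 2 / ↑r) ^ (SimpleGraph.Walk.cons hab w).length * y a
          = (ε ^ 2 / ↑r) ^ w.length * (ε ^ 2 / ↑r * y a) := by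
            rw [SimpleGraph.Walk.length_cons]; ring
        _ ≤ (ε ^ 2 / ↑r) ^ w.length * y b := by
            apply mul_le_mul_of_nonneg_left h1; positivity
        _ ≤ y c := h3
  intro j
  obtain ⟨w0⟩ := hconn.preconnected i0 j
  set p := w0.toPath with hp
  have hlen : (p : (typeGraph Λ).Walk i0 j).length ≤ r := by
    have := SimpleGraph.Walk.IsPath.length_lt p.2
    rw [Fintype.card_fin] at this
    omega
  have hbase : (0:ℝ) < ε ^ 2 / r := by positivity
  have hr1 : (1:ℝ) ≤ r := by exact_mod_cast hr
  have hbase1 : ε ^ 2 / r ≤ 1 := by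
    rw [div_le_one hrR]
    nlinarith [pow_le_one₀ hε.le hε1 (n := 2)]
  have key := hwalk i0 j p hi0pos
  have hmono : (ε ^ 2 / r) ^ r ≤ (ε ^ 2 / r) ^ (p : (typeGraph Λ).Walk i0 j).length :=
    pow_le_pow_of_le_one hbase.le hbase1 hlen
  have hfin : (ε ^ 2 / r) ^ r * (1 / Real.sqrt r) ≤ y j := by
    calc (ε ^ 2 / r) ^ r * (1 / Real.sqrt r)
        ≤ (ε ^ 2 / r) ^ (p : (typeGraph Λ).Walk i0 j).length * y i0 := by
          apply mul_le_mul hmono hi0lb (by positivity) (by positivity)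
      _ ≤ y j := key
  calc ε ^ (2 * r) / (Real.sqrt r * (r:ℝ) ^ r)
      = (ε ^ 2 / r) ^ r * (1 / Real.sqrt r) := by
        rw [div_pow, ← pow_mul]
        field_simp
    _ ≤ y j := hfin

/-- a connected `ε`-separated symmetric nonnegative matrix has a unit
eigenvector for its largest eigenvalue whose entries are all nonnegative and at least
`ε^{2r}/(√r · r^r)`. -/
theorem perron_vector_lower_bound (r : ℕ) (ε : ℝ) (hε : 0 < ε) (hε1 : ε ≤ 1)
    (Λ : Matrix (Fin r) (Fin r) ℝ) (hsymm : Λ.IsSymm)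
    (hnonneg : ∀ i j, 0 ≤ Λ i j) (hconn : ConnectedTypes Λ) (hsep : Separated ε Λ) :
    ∃ y : Fin r → ℝ, euclNorm y = 1 ∧ Λ.mulVec y = maxEig Λ • y ∧
      ∀ j, 0 ≤ y j ∧ ε ^ (2 * r) / (Real.sqrt r * (r : ℝ) ^ r) ≤ y j := by
  haveI hne : Nonempty (Fin r) := hconn.nonempty
  have hr : 0 < r := Fin.pos (Classical.arbitrary (Fin r))
  obtain ⟨y, hsum, hpos, heig⟩ := aux_exists_nonneg_max_eigvec r hr Λ hsymm hnonneg
  refine ⟨y, ?_, heig, fun j => ⟨hpos j, ?_⟩⟩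
  · rw [euclNorm, hsum, Real.sqrt_one]
  · exact aux_lower_bound r hr ε hε hε1 Λ hsymm hnonneg hconn hsep (maxEig Λ) y hpos hsum heig j


end Pandemic
end

section
/- For all A, r ∈ ℕ and ε > 0 there exists δ > 0 such that the following holds. Suppose (n_1,…,n_r) is A-balanced and Λ is connected and ε-separated. Let y_1,…,y_r be an orthonormal eigenbasis of Λ with y_1 a nonnegative eigenvector for the largest eigenvalue, let x_j = D^{−1/2} y_j, and for a vector z ∈ [0,∞)^r write z = Σ_j α_j x_j with α_j = ⟨D^{1/2} z, y_j⟩. Then ‖α_1 x_1‖₂ ≥ δ·‖z‖₂. -/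
open MeasureTheory Matrix

namespace Pandemic

variable {r : ℕ}

set_option maxHeartbeats 2000000 in
/-- writing a nonnegative vector `z = Σ_j α_j x_j` in the eigenbasis
`x_j = D^{-1/2} y_j`, the component along the Perron direction is substantial:
`‖α_1 x_1‖₂ ≥ δ ‖z‖₂`. -/
theorem perron_component_lower_bound (A r : ℕ) (ε : ℝ) (hε : 0 < ε) (hr : 0 < r) :
    ∃ δ > 0, ∀ (n : Fin r → ℕ) (Λ : Matrix (Fin r) (Fin r) ℝ),
      (∀ i, 0 < n i) → Λ.IsSymm → (∀ i j, 0 ≤ Λ i j) →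
      Balanced A n → ConnectedTypes Λ → Separated ε Λ →
      ∀ (y : Fin r → (Fin r → ℝ)) (θ : Fin r → ℝ),
        (∀ i j, y i ⬝ᵥ y j = if i = j then 1 else 0) →
        (∀ i, Λ.mulVec (y i) = θ i • y i) →
        (∀ k, 0 ≤ y ⟨0, hr⟩ k) →
        θ ⟨0, hr⟩ = maxEig Λ →
        ∀ z : Fin r → ℝ, (∀ i, 0 ≤ z i) →
          δ * euclNorm z ≤
            euclNorm (((fun l => Real.sqrt (n l) * z l) ⬝ᵥ y ⟨0, hr⟩) •
              fun k => (Real.sqrt (n k))⁻¹ * y ⟨0, hr⟩ k) := by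
  -- basic positivity facts
  have hr' : (0:ℝ) < (r:ℝ) := by exact_mod_cast hr
  set c0 : ℝ := min (ε^2/(r:ℝ)^2) 1 with hc0def
  have hc0pos : 0 < c0 := lt_min (by positivity) one_pos
  have hc0le : c0 ≤ 1 := min_le_right _ _
  have hδpos : 0 < c0^(2*r) / ((r:ℝ) * Real.sqrt ((r:ℝ)*((A:ℝ)+1))) := by
    apply div_pos (pow_pos hc0pos _)
    exact mul_pos hr' (Real.sqrt_pos.mpr (by positivity))
  refine ⟨c0^(2*r) / ((r:ℝ) * Real.sqrt ((r:ℝ)*((A:ℝ)+1))), hδpos, ?_⟩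
  intro n Λ hn hsymm hΛnn hbal hconn hsep y θ horth heig hynn hθmax z hz
  set i0 : Fin r := ⟨0, hr⟩ with hi0
  set Y : Fin r → ℝ := y i0 with hYdef
  set t : ℝ := θ i0 with htdef
  have hconn' : (typeGraph Λ).Connected := hconn
  -- separation facts
  have hΛub : ∀ i j, Λ i j ≤ 1/ε := fun i j =>
    (hsep i j).elim (fun h => by rw [h]; positivity) (fun h => h.2)
  have hsepl : ∀ i j, 0 < Λ i j → ε ≤ Λ i j := fun i j hpos =>
    (hsep i j).elim (fun h => absurd h (ne_of_gt hpos)) (fun h => h.1)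
  have hsym' : ∀ i j, Λ i j = Λ j i := fun i j => congrFun (congrFun hsymm j) i
  -- eigen equation componentwise
  have heigY : ∀ v, ∑ k, Λ v k * Y k = t * Y v := by
    intro v
    have h := congrFun (heig i0) v
    simpa [Matrix.mulVec, dotProduct] using h
  have hYsq : ∑ k, Y k * Y k = 1 := by simpa [dotProduct] using horth i0 i0
  have hYle1 : ∀ k, Y k ≤ 1 := by
    intro k
    have h1 : Y k * Y k ≤ 1 := by
      rw [← hYsq]
      exact Finset.single_le_sum (fun l _ => mul_self_nonneg (Y l)) (Finset.mem_univ k)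
    nlinarith [hynn k]
  -- a big coordinate
  have hex : ∃ m, (1:ℝ)/(r:ℝ) ≤ Y m * Y m := by
    by_contra hcon
    push_neg at hcon
    have hlt : ∑ k, Y k * Y k < ∑ _k : Fin r, (1:ℝ)/(r:ℝ) :=
      Finset.sum_lt_sum_of_nonempty ⟨i0, Finset.mem_univ i0⟩ (fun k _ => hcon k)
    rw [hYsq] at hlt
    rw [Finset.sum_const, Finset.card_univ, Fintype.card_fin, nsmul_eq_mul,
      mul_one_div, div_self (ne_of_gt hr')] at hlt
    exact lt_irrefl _ hlt
  obtain ⟨m, hmsq⟩ := hex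
  have hmY : 1/Real.sqrt (r:ℝ) ≤ Y m := by
    have h1 : Real.sqrt ((1:ℝ)/(r:ℝ)) ≤ Real.sqrt (Y m * Y m) := Real.sqrt_le_sqrt hmsq
    rw [Real.sqrt_mul_self (hynn m)] at h1
    calc 1/Real.sqrt (r:ℝ) = Real.sqrt ((1:ℝ)/(r:ℝ)) := by
          rw [one_div, one_div, Real.sqrt_inv]
      _ ≤ Y m := h1
  have hsqrtr : (0:ℝ) < Real.sqrt (r:ℝ) := Real.sqrt_pos.mpr hr'
  have hYm0 : 0 < Y m := lt_of_lt_of_le (by positivity) hmY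
  -- t basic bounds
  have hteq : t = ∑ v, Y v * ∑ k, Λ v k * Y k := by
    have h1 : ∑ v, Y v * ∑ k, Λ v k * Y k = ∑ v, Y v * (t * Y v) :=
      Finset.sum_congr rfl fun v _ => by rw [heigY v]
    have h2 : ∑ v, Y v * (t * Y v) = t * ∑ v, Y v * Y v := by
      rw [Finset.mul_sum]
      exact Finset.sum_congr rfl fun v _ => by ring
    rw [h1, h2, hYsq, mul_one]
  have ht0 : 0 ≤ t := by
    rw [hteq]
    exact Finset.sum_nonneg fun v _ => mul_nonneg (hynn v)
      (Finset.sum_nonneg fun k _ => mul_nonneg (hΛnn v k) (hynn k))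
  have hrow : ∀ v, Y v * ∑ k, Λ v k * Y k ≤ (r:ℝ) * (1/ε) := by
    intro v
    have h1 : ∑ k, Λ v k * Y k ≤ ∑ _k : Fin r, (1/ε) :=
      Finset.sum_le_sum fun k _ => by
        calc Λ v k * Y k ≤ Λ v k * 1 := mul_le_mul_of_nonneg_left (hYle1 k) (hΛnn v k)
          _ = Λ v k := mul_one _
          _ ≤ 1/ε := hΛub v k
    have h2 : ∑ _k : Fin r, (1/ε) = (r:ℝ)*(1/ε) := by
      rw [Finset.sum_const, Finset.card_univ, Fintype.card_fin, nsmul_eq_mul]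
    calc Y v * ∑ k, Λ v k * Y k ≤ 1 * ((r:ℝ)*(1/ε)) := by
          refine mul_le_mul (hYle1 v) (by rw [← h2]; exact h1) ?_ zero_le_one
          exact Finset.sum_nonneg fun k _ => mul_nonneg (hΛnn v k) (hynn k)
      _ = (r:ℝ)*(1/ε) := one_mul _
  have htub : t ≤ (r:ℝ)^2/ε := by
    rw [hteq]
    calc ∑ v, Y v * ∑ k, Λ v k * Y k ≤ ∑ _v : Fin r, (r:ℝ)*(1/ε) :=
          Finset.sum_le_sum fun v _ => hrow v
      _ = (r:ℝ) * ((r:ℝ)*(1/ε)) := by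
          rw [Finset.sum_const, Finset.card_univ, Fintype.card_fin, nsmul_eq_mul]
      _ = (r:ℝ)^2/ε := by ring
  have htub' : t * ε ≤ (r:ℝ)^2 := (le_div_iff₀ hε).mp htub
  -- lower bound on all coordinates of Y
  set c : ℝ := c0^r / Real.sqrt (r:ℝ) with hcdef
  have hcpos : 0 < c := div_pos (pow_pos hc0pos r) hsqrtr
  have hc0r1 : c0^r ≤ 1 := pow_le_one₀ hc0pos.le hc0le
  have hlowY : ∀ k, c ≤ Y k := by
    intro k
    rcases eq_or_ne k m with rfl | hkm
    · calc c = c0^r/Real.sqrt (r:ℝ) := hcdef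
        _ ≤ 1/Real.sqrt (r:ℝ) := by gcongr
        _ ≤ Y k := hmY
    · obtain ⟨w⟩ := hconn'.preconnected m k
      have ht : 0 < t := by
        rcases ht0.eq_or_lt with h | h
        · exfalso
          cases w with
          | nil => exact hkm rfl
          | @cons _ b _ hadj q =>
            obtain ⟨hne, hpos⟩ := hadj
            have hpos' : 0 < Λ b m := by
              rcases hpos with hp | hp
              · rw [← hsym' m b]; exact hp
              · exact hp
            have h0 : Λ b m * Y m ≤ ∑ k', Λ b k' * Y k' :=
              Finset.single_le_sum (fun l _ => mul_nonneg (hΛnn b l) (hynn l))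
                (Finset.mem_univ m)
            rw [heigY b, ← h, zero_mul] at h0
            nlinarith
        · exact h
      have hstep : ∀ u v, (typeGraph Λ).Adj u v → c0 * Y u ≤ Y v := by
        rintro u v ⟨hne, hpos⟩
        have hΛvu : ε ≤ Λ v u := by
          apply hsepl
          rcases hpos with hp | hp
          · rw [← hsym' u v]; exact hp
          · exact hp
        have h5 : ε * Y u ≤ t * Y v := by
          rw [← heigY v]
          calc ε * Y u ≤ Λ v u * Y u := mul_le_mul_of_nonneg_right hΛvu (hynn u)
            _ ≤ ∑ l, Λ v l * Y l :=
              Finset.single_le_sum (fun l _ => mul_nonneg (hΛnn v l) (hynn l))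
                (Finset.mem_univ u)
        have h7 : ε^2 * Y u ≤ (r:ℝ)^2 * Y v := by
          nlinarith [mul_le_mul_of_nonneg_left h5 hε.le,
            mul_le_mul_of_nonneg_right htub' (hynn v), hynn v, hε]
        have h8 : (ε^2/(r:ℝ)^2) * Y u ≤ Y v := by
          rw [div_mul_eq_mul_div, div_le_iff₀ (by positivity : (0:ℝ) < (r:ℝ)^2)]
          linarith
        calc c0 * Y u ≤ (ε^2/(r:ℝ)^2) * Y u :=
              mul_le_mul_of_nonneg_right (min_le_left _ _) (hynn u)
          _ ≤ Y v := h8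
      have hwalk : ∀ (u v : Fin r) (q : (typeGraph Λ).Walk u v),
          c0 ^ q.length * Y u ≤ Y v := by
        intro u v q
        induction q with
        | nil => simpa using le_refl _
        | @cons a b e hadj q ih =>
          rw [SimpleGraph.Walk.length_cons]
          calc c0^(q.length+1) * Y a = c0^q.length * (c0 * Y a) := by ring
            _ ≤ c0^q.length * Y b :=
              mul_le_mul_of_nonneg_left (hstep a b hadj) (by positivity)
            _ ≤ Y e := ih
      set p : (typeGraph Λ).Walk m k := (w.toPath).val with hp
      have hplen : p.length ≤ r := by
        have := w.toPath.2.length_lt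
        simpa [Fintype.card_fin] using Nat.le_of_lt_succ (Nat.lt_succ_of_lt this)
      calc c = c0^r * (1/Real.sqrt (r:ℝ)) := by rw [hcdef]; ring
        _ ≤ c0^(p.length) * (1/Real.sqrt (r:ℝ)) :=
          mul_le_mul_of_nonneg_right (pow_le_pow_of_le_one hc0pos.le hc0le hplen)
            (by positivity)
        _ ≤ c0^(p.length) * Y m := mul_le_mul_of_nonneg_left hmY (by positivity)
        _ ≤ Y k := hwalk m k p
  -- final computation
  set α : ℝ := (fun l => Real.sqrt (n l) * z l) ⬝ᵥ Y with hαdef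
  have hαeq : α = ∑ l, Real.sqrt (n l) * z l * Y l := rfl
  have hαnn : 0 ≤ α := by
    rw [hαeq]
    exact Finset.sum_nonneg fun l _ =>
      mul_nonneg (mul_nonneg (Real.sqrt_nonneg _) (hz l)) (hynn l)
  have hexj : ∃ j, (∑ k, z k^2)/(r:ℝ) ≤ z j^2 := by
    by_contra hcon
    push_neg at hcon
    have hlt : ∑ k, z k^2 < ∑ _k : Fin r, (∑ k, z k^2)/(r:ℝ) :=
      Finset.sum_lt_sum_of_nonempty ⟨i0, Finset.mem_univ i0⟩ (fun k _ => hcon k)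
    rw [Finset.sum_const, Finset.card_univ, Fintype.card_fin, nsmul_eq_mul,
      mul_div_cancel₀ _ (ne_of_gt hr')] at hlt
    exact lt_irrefl _ hlt
  obtain ⟨j, hj⟩ := hexj
  have h1 : Real.sqrt (∑ k, z k^2) ≤ Real.sqrt (r:ℝ) * z j := by
    have h2 : ∑ k, z k^2 ≤ (Real.sqrt (r:ℝ) * z j)^2 := by
      rw [mul_pow, Real.sq_sqrt hr'.le]
      rw [div_le_iff₀ hr'] at hj
      linarith
    calc Real.sqrt (∑ k, z k^2) ≤ Real.sqrt ((Real.sqrt (r:ℝ) * z j)^2) :=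
          Real.sqrt_le_sqrt h2
      _ = Real.sqrt (r:ℝ) * z j := Real.sqrt_sq (mul_nonneg hsqrtr.le (hz j))
  have hni0 : (0:ℝ) < Real.sqrt (n i0) := Real.sqrt_pos.mpr (by exact_mod_cast hn i0)
  have hnj : (0:ℝ) < Real.sqrt (n j) := Real.sqrt_pos.mpr (by exact_mod_cast hn j)
  have h2 : Real.sqrt (n i0) ≤ Real.sqrt ((A:ℝ)+1) * Real.sqrt (n j) := by
    have hb : (n i0 : ℝ) ≤ ((A:ℝ)+1) * (n j : ℝ) := by
      have h3 : (n i0:ℝ) ≤ (A:ℝ) * (n j:ℝ) := by exact_mod_cast hbal i0 j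
      have h4 : (0:ℝ) ≤ (n j:ℝ) := Nat.cast_nonneg _
      nlinarith
    calc Real.sqrt (n i0) ≤ Real.sqrt (((A:ℝ)+1) * (n j:ℝ)) := Real.sqrt_le_sqrt hb
      _ = Real.sqrt ((A:ℝ)+1) * Real.sqrt (n j) := Real.sqrt_mul (by positivity) _
  have hfrac : Real.sqrt (∑ k, z k^2) / Real.sqrt ((r:ℝ)*((A:ℝ)+1)) ≤
      (Real.sqrt (n j) * z j) * (Real.sqrt (n i0))⁻¹ := by
    rw [Real.sqrt_mul hr'.le]
    have e1 : Real.sqrt (∑ k, z k^2) / (Real.sqrt (r:ℝ) * Real.sqrt ((A:ℝ)+1)) ≤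
        z j / Real.sqrt ((A:ℝ)+1) := by
      rw [div_le_div_iff₀ (by positivity) (by positivity)]
      calc Real.sqrt (∑ k, z k^2) * Real.sqrt ((A:ℝ)+1)
          ≤ (Real.sqrt (r:ℝ) * z j) * Real.sqrt ((A:ℝ)+1) :=
            mul_le_mul_of_nonneg_right h1 (Real.sqrt_nonneg _)
        _ = z j * (Real.sqrt (r:ℝ) * Real.sqrt ((A:ℝ)+1)) := by ring
    have e2 : z j / Real.sqrt ((A:ℝ)+1) ≤
        (Real.sqrt (n j) * z j) * (Real.sqrt (n i0))⁻¹ := by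
      rw [← div_eq_mul_inv]
      have e3 : z j / Real.sqrt ((A:ℝ)+1) =
          (Real.sqrt (n j) * z j) / (Real.sqrt ((A:ℝ)+1) * Real.sqrt (n j)) := by
        field_simp
      rw [e3]
      exact div_le_div_of_nonneg_left (mul_nonneg (Real.sqrt_nonneg _) (hz j)) hni0 h2
    exact e1.trans e2
  have hαlb : c * (Real.sqrt (n j) * z j) ≤ α := by
    rw [hαeq]
    have h6 : Real.sqrt (n j) * z j * Y j ≤ ∑ l, Real.sqrt (n l) * z l * Y l :=
      Finset.single_le_sum (f := fun l => Real.sqrt (n l) * z l * Y l)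
        (fun l _ => mul_nonneg (mul_nonneg (Real.sqrt_nonneg _) (hz l)) (hynn l))
        (Finset.mem_univ j)
    calc c * (Real.sqrt (n j) * z j) ≤ (Real.sqrt (n j) * z j) * Y j := by
          rw [mul_comm]
          exact mul_le_mul_of_nonneg_left (hlowY j)
            (mul_nonneg (Real.sqrt_nonneg _) (hz j))
      _ ≤ ∑ l, Real.sqrt (n l) * z l * Y l := h6
  have hc2 : c ^ 2 = c0^(2*r)/(r:ℝ) := by
    rw [hcdef, div_pow, Real.sq_sqrt hr'.le, ← pow_mul, Nat.mul_comm r 2]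
  show c0^(2*r) / ((r:ℝ) * Real.sqrt ((r:ℝ)*((A:ℝ)+1))) * euclNorm z ≤
    euclNorm (α • fun k => (Real.sqrt (n k))⁻¹ * Y k)
  have hRHS : euclNorm (α • fun k => (Real.sqrt (n k))⁻¹ * Y k) =
      Real.sqrt (∑ k, (α * ((Real.sqrt (n k))⁻¹ * Y k))^2) := rfl
  rw [hRHS]
  have hLast : α * ((Real.sqrt (n i0))⁻¹ * Y i0) ≤
      Real.sqrt (∑ k, (α * ((Real.sqrt (n k))⁻¹ * Y k))^2) := by
    have h5 : (α * ((Real.sqrt (n i0))⁻¹ * Y i0))^2 ≤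
        ∑ k, (α * ((Real.sqrt (n k))⁻¹ * Y k))^2 :=
      Finset.single_le_sum (f := fun k => (α * ((Real.sqrt (n k))⁻¹ * Y k))^2)
        (fun k _ => sq_nonneg _) (Finset.mem_univ i0)
    calc α * ((Real.sqrt (n i0))⁻¹ * Y i0) ≤ |α * ((Real.sqrt (n i0))⁻¹ * Y i0)| :=
          le_abs_self _
      _ = Real.sqrt ((α * ((Real.sqrt (n i0))⁻¹ * Y i0))^2) :=
          (Real.sqrt_sq_eq_abs _).symm
      _ ≤ Real.sqrt (∑ k, (α * ((Real.sqrt (n k))⁻¹ * Y k))^2) := Real.sqrt_le_sqrt h5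
  calc c0^(2*r) / ((r:ℝ) * Real.sqrt ((r:ℝ)*((A:ℝ)+1))) * euclNorm z
      = c ^ 2 * (Real.sqrt (∑ k, z k^2) / Real.sqrt ((r:ℝ)*((A:ℝ)+1))) := by
        rw [hc2]; unfold euclNorm; ring
    _ ≤ c ^ 2 * ((Real.sqrt (n j) * z j) * (Real.sqrt (n i0))⁻¹) :=
        mul_le_mul_of_nonneg_left hfrac (by positivity)
    _ = (c * (Real.sqrt (n j) * z j)) * ((Real.sqrt (n i0))⁻¹ * c) := by ring
    _ ≤ α * ((Real.sqrt (n i0))⁻¹ * Y i0) := by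
        refine mul_le_mul hαlb ?_ (by positivity) hαnn
        exact mul_le_mul_of_nonneg_left (hlowY i0) (by positivity)
    _ ≤ Real.sqrt (∑ k, (α * ((Real.sqrt (n k))⁻¹ * Y k))^2) := hLast

end Pandemic
end

section
/- Let A ∈ ℕ and suppose (n_1,…,n_r) is A-balanced. Let y_1,…,y_r be an orthonormal eigenbasis of the symmetric matrix Λ, let x_j = D^{−1/2} y_j, and for a vector z ∈ [0,∞)^r write z = Σ_j α_j x_j with α_j = ⟨D^{1/2} z, y_j⟩. Then for every j ∈ [r], ‖α_j x_j‖₂ ≤ √A · ‖z‖₂. -/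
open MeasureTheory Matrix

namespace Pandemic

variable {r : ℕ}

/-- writing a nonnegative vector `z = Σ_j α_j x_j` in the eigenbasis
`x_j = D^{-1/2} y_j`, each component satisfies `‖α_j x_j‖₂ ≤ √A · ‖z‖₂`. -/
theorem eigen_component_upper_bound (A r : ℕ) (n : Fin r → ℕ) (hn : ∀ i, 0 < n i)
    (hbal : Balanced A n) (Λ : Matrix (Fin r) (Fin r) ℝ) (hsymm : Λ.IsSymm)
    (hnonneg : ∀ i j, 0 ≤ Λ i j)
    (y : Fin r → (Fin r → ℝ)) (θ : Fin r → ℝ)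
    (hortho : ∀ i j, y i ⬝ᵥ y j = if i = j then 1 else 0)
    (heig : ∀ i, Λ.mulVec (y i) = θ i • y i)
    (z : Fin r → ℝ) (hz : ∀ i, 0 ≤ z i) :
    ∀ j, euclNorm (((fun l => Real.sqrt (n l) * z l) ⬝ᵥ y j) •
        fun k => (Real.sqrt (n k))⁻¹ * y j k) ≤ Real.sqrt A * euclNorm z := by
  intro j
  classical
  have hn' : ∀ k, (0:ℝ) < n k := fun k => by exact_mod_cast hn k
  set α : ℝ := (fun l => Real.sqrt (n l) * z l) ⬝ᵥ y j with hαdef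
  have hyy : ∑ k, (y j k) ^ 2 = 1 := by
    have h := hortho j j
    simpa [dotProduct, pow_two] using h
  have hCS : α ^ 2 ≤ ∑ i, (n i : ℝ) * z i ^ 2 := by
    have h := Finset.sum_mul_sq_le_sq_mul_sq Finset.univ
      (fun l => Real.sqrt (n l) * z l) (y j)
    calc α ^ 2 ≤ (∑ i, (Real.sqrt (n i) * z i) ^ 2) * ∑ i, (y j i) ^ 2 := h
      _ = ∑ i, (n i : ℝ) * z i ^ 2 := by
          rw [hyy, mul_one]
          refine Finset.sum_congr rfl fun i _ => ?_
          rw [mul_pow, Real.sq_sqrt (hn' i).le]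
  have hT0 : (0:ℝ) ≤ ∑ k, (y j k) ^ 2 / n k :=
    Finset.sum_nonneg fun k _ => div_nonneg (sq_nonneg _) (hn' k).le
  have key : ∑ k, (α * ((Real.sqrt (n k))⁻¹ * y j k)) ^ 2 ≤ A * ∑ i, z i ^ 2 := by
    have h1 : ∑ k, (α * ((Real.sqrt (n k))⁻¹ * y j k)) ^ 2
        = α ^ 2 * ∑ k, (y j k) ^ 2 / n k := by
      rw [Finset.mul_sum]
      refine Finset.sum_congr rfl fun k _ => ?_
      rw [mul_pow, mul_pow, inv_pow, Real.sq_sqrt (hn' k).le, div_eq_mul_inv]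
      ring
    rw [h1]
    calc α ^ 2 * ∑ k, (y j k) ^ 2 / n k
        ≤ (∑ i, (n i : ℝ) * z i ^ 2) * ∑ k, (y j k) ^ 2 / n k :=
          mul_le_mul_of_nonneg_right hCS hT0
      _ = ∑ i, ∑ k, ((n i : ℝ) * z i ^ 2) * ((y j k) ^ 2 / n k) := by
          rw [Finset.sum_mul_sum]
      _ ≤ ∑ i, ∑ k, (A : ℝ) * (z i ^ 2 * (y j k) ^ 2) := by
          refine Finset.sum_le_sum fun i _ => Finset.sum_le_sum fun k _ => ?_
          have hb : (n i : ℝ) ≤ (A : ℝ) * n k := by exact_mod_cast hbal i k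
          have : (n i : ℝ) * z i ^ 2 * ((y j k) ^ 2 / n k)
              = ((n i : ℝ) / n k) * (z i ^ 2 * (y j k) ^ 2) := by
            field_simp
          rw [this]
          refine mul_le_mul_of_nonneg_right ?_
            (mul_nonneg (sq_nonneg _) (sq_nonneg _))
          rw [div_le_iff₀ (hn' k)]
          exact hb
      _ = (A : ℝ) * ∑ i, z i ^ 2 := by
          have hinner : ∀ i, ∑ k, (A : ℝ) * (z i ^ 2 * y j k ^ 2)
              = (A : ℝ) * z i ^ 2 := fun i => by
            rw [← Finset.mul_sum, ← Finset.mul_sum, hyy, mul_one]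
          simp_rw [hinner]
          rw [← Finset.mul_sum]
  have hgoal : ∑ k, ((α • fun k => (Real.sqrt (n k))⁻¹ * y j k) k) ^ 2
      ≤ A * ∑ i, z i ^ 2 := by simpa [smul_eq_mul] using key
  calc euclNorm (α • fun k => (Real.sqrt (n k))⁻¹ * y j k)
      ≤ Real.sqrt ((A : ℝ) * ∑ i, z i ^ 2) := Real.sqrt_le_sqrt hgoal
    _ = Real.sqrt A * euclNorm z := Real.sqrt_mul (Nat.cast_nonneg A) _

end Pandemic
end

section
/- For all A, r ∈ ℕ and ε > 0 there exists k ∈ ℕ such that the following holds. Suppose (n_1,…,n_r) is A-balanced, Λ is connected and ε-separated, and ρ(M) ≥ 1 + ε. Then for every vector z ∈ ℝ^r with nonnegative entries, ‖M^k z‖₂ ≥ 2‖z‖₂. -/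
open MeasureTheory Matrix

namespace Pandemic

variable {r : ℕ}

section PumpAux

variable {r : ℕ}

private lemma entries_nonneg_pow {X : Matrix (Fin r) (Fin r) ℝ}
    (hX : ∀ i j, 0 ≤ X i j) (k : ℕ) : ∀ i j, 0 ≤ (X ^ k) i j := by
  induction k with
  | zero =>
    intro i j
    rw [pow_zero]
    by_cases h : i = j <;> simp [Matrix.one_apply, h]
  | succ k ih =>
    intro i j
    rw [pow_succ, Matrix.mul_apply]
    exact Finset.sum_nonneg fun l _ => mul_nonneg (ih i l) (hX l j)

private lemma mulVec_mono {X : Matrix (Fin r) (Fin r) ℝ} (hX : ∀ i j, 0 ≤ X i j)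
    {u v : Fin r → ℝ} (h : ∀ j, u j ≤ v j) (i : Fin r) :
    X.mulVec u i ≤ X.mulVec v i := by
  simp only [Matrix.mulVec, dotProduct]
  exact Finset.sum_le_sum fun j _ => mul_le_mul_of_nonneg_left (h j) (hX i j)

private lemma pump {X : Matrix (Fin r) (Fin r) ℝ} (hX : ∀ i j, 0 ≤ X i j)
    {t : ℝ} (ht : 0 ≤ t) {a : Fin r → ℝ}
    (h : ∀ i, t * a i ≤ X.mulVec a i) (k : ℕ) :
    ∀ i, t ^ k * a i ≤ (X ^ k).mulVec a i := by
  induction k with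
  | zero => intro i; simp [Matrix.one_mulVec]
  | succ k ih =>
    intro i
    have e1 : (X ^ (k + 1)).mulVec a = (X ^ k).mulVec (X.mulVec a) := by
      rw [Matrix.mulVec_mulVec, ← pow_succ]
    have e2 : (X ^ k).mulVec (fun j => t * a j) i = t * (X ^ k).mulVec a i := by
      have : (fun j => t * a j) = t • a := rfl
      rw [this, Matrix.mulVec_smul]
      rfl
    have step1 : (X ^ k).mulVec (fun j => t * a j) i ≤ (X ^ k).mulVec (X.mulVec a) i :=
      mulVec_mono (entries_nonneg_pow hX k) h i
    have step2 : t ^ (k + 1) * a i ≤ t * (X ^ k).mulVec a i := by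
      have := ih i
      calc t ^ (k + 1) * a i = t * (t ^ k * a i) := by ring
        _ ≤ t * (X ^ k).mulVec a i := mul_le_mul_of_nonneg_left this ht
    rw [e1]
    calc t ^ (k + 1) * a i ≤ t * (X ^ k).mulVec a i := step2
      _ = (X ^ k).mulVec (fun j => t * a j) i := e2.symm
      _ ≤ (X ^ k).mulVec (X.mulVec a) i := step1

private lemma walk_lower {Λ : Matrix (Fin r) (Fin r) ℝ} (hΛ : ∀ i j, 0 ≤ Λ i j)
    (hsym : Λ.IsSymm) {ε : ℝ} (hε : 0 < ε) (hsep : Separated ε Λ) :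
    ∀ (m : ℕ) (i j : Fin r) (p : (typeGraph Λ).Walk i j), p.length ≤ m →
      (min ε 1) ^ m ≤ ((1 + Λ) ^ m) i j := by
  have hc0 : 0 ≤ min ε 1 := le_min hε.le one_pos.le
  have hB : ∀ a b : Fin r, 0 ≤ (1 + Λ : Matrix (Fin r) (Fin r) ℝ) a b := by
    intro a b
    have h1 := hΛ a b
    by_cases h : a = b
    · subst h
      rw [Matrix.add_apply, Matrix.one_apply_eq]
      linarith
    · rw [Matrix.add_apply, Matrix.one_apply_ne h]
      linarith
  have hdiag : ∀ a : Fin r, min ε 1 ≤ (1 + Λ : Matrix (Fin r) (Fin r) ℝ) a a := by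
    intro a
    simp only [Matrix.add_apply, Matrix.one_apply_eq]
    have := hΛ a a
    have := min_le_right ε 1
    linarith
  have hadj : ∀ a b : Fin r, (typeGraph Λ).Adj a b →
      min ε 1 ≤ (1 + Λ : Matrix (Fin r) (Fin r) ℝ) a b := by
    intro a b hab
    have hne : a ≠ b := hab.1
    have hpos : 0 < Λ a b := by
      rcases hab.2 with h | h
      · exact h
      · rwa [hsym.apply a b] at h
    have : ε ≤ Λ a b := by
      rcases hsep a b with h | h
      · exact absurd h hpos.ne'
      · exact h.1
    simp only [Matrix.add_apply, Matrix.one_apply_ne hne]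
    have := min_le_left ε 1
    linarith
  intro m
  induction m with
  | zero =>
    intro i j p hp
    have : i = j := p.eq_of_length_eq_zero (Nat.le_zero.mp hp)
    subst this
    simp [Matrix.one_apply]
  | succ m ih =>
    intro i j p hp
    have hBm := entries_nonneg_pow hB m
    rw [show ((1 + Λ : Matrix (Fin r) (Fin r) ℝ)) ^ (m + 1) = (1 + Λ) * (1 + Λ) ^ m from
      pow_succ' _ m, Matrix.mul_apply]
    cases p with
    | nil =>
      calc (min ε 1) ^ (m + 1) = min ε 1 * (min ε 1) ^ m := by ring
        _ ≤ (1 + Λ : Matrix (Fin r) (Fin r) ℝ) i i * ((1 + Λ) ^ m) i i :=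
            mul_le_mul (hdiag i) (ih i i SimpleGraph.Walk.nil (Nat.zero_le m))
              (pow_nonneg hc0 m) (hB i i)
        _ ≤ ∑ l, (1 + Λ : Matrix (Fin r) (Fin r) ℝ) i l * ((1 + Λ) ^ m) l i :=
            Finset.single_le_sum (f := fun l => (1 + Λ : Matrix (Fin r) (Fin r) ℝ) i l *
              ((1 + Λ) ^ m) l i) (fun l _ => mul_nonneg (hB i l) (hBm l i))
              (Finset.mem_univ i)
    | @cons _ l _ hil q =>
      have hql : q.length ≤ m := by
        have := hp
        simp only [SimpleGraph.Walk.length_cons] at this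
        omega
      calc (min ε 1) ^ (m + 1) = min ε 1 * (min ε 1) ^ m := by ring
        _ ≤ (1 + Λ : Matrix (Fin r) (Fin r) ℝ) i l * ((1 + Λ) ^ m) l j :=
            mul_le_mul (hadj i l hil) (ih l j q hql) (pow_nonneg hc0 m) (hB i l)
        _ ≤ ∑ l', (1 + Λ : Matrix (Fin r) (Fin r) ℝ) i l' * ((1 + Λ) ^ m) l' j :=
            Finset.single_le_sum (f := fun l' => (1 + Λ : Matrix (Fin r) (Fin r) ℝ) i l' *
              ((1 + Λ) ^ m) l' j) (fun l' _ => mul_nonneg (hB i l') (hBm l' j))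
              (Finset.mem_univ l)

private lemma pow_upper {X : Matrix (Fin r) (Fin r) ℝ} {β : ℝ} (hβ : 0 ≤ β)
    (h0 : ∀ i j, 0 ≤ X i j) (hX : ∀ i j, X i j ≤ β) (m : ℕ) :
    ∀ i j, (X ^ m) i j ≤ ((r : ℝ) * β + 1) ^ m := by
  have hr0 : (0:ℝ) ≤ (r : ℝ) := Nat.cast_nonneg r
  have hrb : (0:ℝ) ≤ (r : ℝ) * β + 1 := by positivity
  induction m with
  | zero =>
    intro i j
    rw [pow_zero, pow_zero]
    by_cases h : i = j <;> simp [Matrix.one_apply, h]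
  | succ m ih =>
    intro i j
    rw [pow_succ, Matrix.mul_apply]
    have hpow : (0:ℝ) ≤ ((r : ℝ) * β + 1) ^ m := pow_nonneg hrb m
    calc ∑ l, (X ^ m) i l * X l j ≤ ∑ _l : Fin r, ((r : ℝ) * β + 1) ^ m * β :=
        Finset.sum_le_sum fun l _ => mul_le_mul (ih i l) (hX l j) (h0 l j) hpow
      _ = (r : ℝ) * (((r : ℝ) * β + 1) ^ m * β) := by
          rw [Finset.sum_const, Finset.card_univ, Fintype.card_fin, nsmul_eq_mul]
      _ ≤ ((r : ℝ) * β + 1) ^ (m + 1) := by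
          rw [pow_succ]
          nlinarith

private lemma dot_symm {X : Matrix (Fin r) (Fin r) ℝ} (hX : X.IsSymm) (u v : Fin r → ℝ) :
    ∑ i, u i * X.mulVec v i = ∑ j, X.mulVec u j * v j := by
  simp only [Matrix.mulVec, dotProduct, Finset.mul_sum, Finset.sum_mul]
  rw [Finset.sum_comm]
  refine Finset.sum_congr rfl fun j _ => Finset.sum_congr rfl fun i _ => ?_
  rw [← hX.apply i j]
  ring

end PumpAux

set_option maxHeartbeats 1000000 in
/-- in the super-critical case there is `k` with `‖M^k z‖₂ ≥ 2‖z‖₂` for all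
nonnegative vectors `z`. -/
theorem pump_doubling (A r : ℕ) (ε : ℝ) (hε : 0 < ε) :
    ∃ k : ℕ, ∀ (n : Fin r → ℕ) (Λ : Matrix (Fin r) (Fin r) ℝ),
      (∀ i, 0 < n i) → Λ.IsSymm → (∀ i j, 0 ≤ Λ i j) →
      Balanced A n → ConnectedTypes Λ → Separated ε Λ →
      1 + ε ≤ maxEig (mMat n Λ) →
      ∀ z : Fin r → ℝ, (∀ i, 0 ≤ z i) →
        2 * euclNorm z ≤ euclNorm ((mMat n Λ ^ k).mulVec z) := by
  rcases Nat.eq_zero_or_pos r with rfl | hr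
  · refine ⟨0, ?_⟩
    intro n Λ _ _ _ _ _ _ _ z _
    simp [euclNorm, Finset.univ_eq_empty]
  -- the constants
  set c : ℝ := min ε 1 with hc_def
  have hc0 : 0 < c := lt_min hε one_pos
  set δ : ℝ := c ^ (r - 1) with hδ_def
  have hδ0 : 0 < δ := pow_pos hc0 _
  set β : ℝ := 1 + 1 / ε with hβ_def
  have hβ0 : (0:ℝ) ≤ β := by positivity
  set C : ℝ := ((r : ℝ) * β + 1) ^ (r - 1) with hC_def
  have hC0 : 0 < C := by positivity
  have hr1 : (1:ℝ) ≤ (r : ℝ) := by exact_mod_cast hr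
  obtain ⟨k, hk⟩ := pow_unbounded_of_one_lt (R := ℝ)
    (2 * r * C * (A + 1) / δ) (by linarith : (1:ℝ) < 1 + ε / 2)
  have hkey : 2 * (r : ℝ) * C * (A + 1) ≤ δ * (1 + ε / 2) ^ k := by
    rw [div_lt_iff₀ hδ0] at hk
    nlinarith
  refine ⟨k, ?_⟩
  intro n Λ hn hsym hΛnn hbal hconn hsep hρ z hz
  -- basic setup
  set i0 : Fin r := ⟨0, hr⟩ with hi0_def
  have hA1 : 1 ≤ A := by
    by_contra h
    have hA0 : A = 0 := by omega
    have := hbal i0 i0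
    rw [hA0] at this
    simp at this
    exact absurd this (hn i0).ne'
  have hAr : (1:ℝ) ≤ (A : ℝ) := by exact_mod_cast hA1
  set s : Fin r → ℝ := fun i => Real.sqrt (n i) with hs_def
  have hs : ∀ i, 0 < s i := fun i => Real.sqrt_pos.mpr (by exact_mod_cast hn i)
  have hssq : ∀ i, s i * s i = (n i : ℝ) := fun i => Real.mul_self_sqrt (Nat.cast_nonneg _)
  have hMapp : ∀ i j, mMat n Λ i j = Λ i j * s j / s i := by
    intro i j
    have h1 : Real.sqrt ((n i : ℝ) * (n j : ℝ)) = s i * s j :=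
      Real.sqrt_mul (Nat.cast_nonneg _) _
    have h2 : (n j : ℝ) = s j * s j := (hssq j).symm
    simp only [mMat, pMat]
    rw [h1]
    rw [h2]
    have hsi := (hs i).ne'
    have hsj := (hs j).ne'
    field_simp
  have hMV : ∀ v : Fin r → ℝ,
      (mMat n Λ).mulVec v = fun i => Λ.mulVec (fun j => s j * v j) i / s i := by
    intro v
    funext i
    simp only [Matrix.mulVec, dotProduct]
    rw [Finset.sum_div]
    refine Finset.sum_congr rfl fun j _ => ?_
    rw [hMapp i j]
    have hsi := (hs i).ne'
    field_simp
  have hpowMV : ∀ (m : ℕ) (v : Fin r → ℝ),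
      (mMat n Λ ^ m).mulVec v = fun i => (Λ ^ m).mulVec (fun j => s j * v j) i / s i := by
    intro m
    induction m with
    | zero =>
      intro v
      funext i
      have hsi := (hs i).ne'
      rw [pow_zero, pow_zero, Matrix.one_mulVec, Matrix.one_mulVec]
      field_simp
    | succ m ih =>
      intro v
      have e1 : (mMat n Λ ^ (m + 1)).mulVec v
          = (mMat n Λ ^ m).mulVec ((mMat n Λ).mulVec v) := by
        rw [Matrix.mulVec_mulVec, ← pow_succ]
      rw [e1, ih]
      have e2 : (fun j => s j * (mMat n Λ).mulVec v j) = Λ.mulVec (fun j => s j * v j) := by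
        funext j
        rw [hMV v]
        have hsj := (hs j).ne'
        field_simp
      rw [e2, Matrix.mulVec_mulVec, ← pow_succ]
  -- extract an eigenvalue above 1 + ε/2
  have hne : {t : ℝ | Module.End.HasEigenvalue (Matrix.toLin' (mMat n Λ)) t}.Nonempty := by
    by_contra h
    rw [Set.not_nonempty_iff_eq_empty] at h
    have h0 : maxEig (mMat n Λ) = 0 := by rw [maxEig, h, Real.sSup_empty]
    rw [h0] at hρ
    linarith
  obtain ⟨t, htmem, htgt⟩ := exists_lt_of_lt_csSup hne
    (lt_of_lt_of_le (by linarith : 1 + ε / 2 < 1 + ε) hρ)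
  obtain ⟨x, hx⟩ := Module.End.HasEigenvalue.exists_hasEigenvector htmem
  have hMx : (mMat n Λ).mulVec x = t • x := by
    have h1 := hx.apply_eq_smul
    rwa [Matrix.toLin'_apply] at h1
  have ht0 : 0 < t := by linarith
  set y : Fin r → ℝ := fun j => s j * x j with hy_def
  have hy0 : ∃ i, y i ≠ 0 := by
    obtain ⟨i, hi⟩ := Function.ne_iff.mp hx.right
    exact ⟨i, mul_ne_zero (hs i).ne' (by simpa using hi)⟩
  have hΛy : ∀ i, Λ.mulVec y i = t * y i := by
    intro i
    have h1 : (mMat n Λ).mulVec x i = t * x i := by rw [hMx]; rfl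
    rw [hMV x] at h1
    have hsi := (hs i).ne'
    have h2 : Λ.mulVec y i = t * x i * s i := by
      field_simp at h1
      linarith
    rw [h2]
    show t * x i * s i = t * (s i * x i)
    ring
  set a : Fin r → ℝ := fun i => |y i| with ha_def
  have hann : ∀ i, 0 ≤ a i := fun i => abs_nonneg _
  set Sy : ℝ := ∑ i, a i with hSy_def
  have hSy : 0 < Sy := by
    obtain ⟨i1, hi1⟩ := hy0
    exact Finset.sum_pos' (fun i _ => abs_nonneg _) ⟨i1, Finset.mem_univ _, abs_pos.mpr hi1⟩
  have hΛa : ∀ i, t * a i ≤ Λ.mulVec a i := by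
    intro i
    have h1 : t * a i = |t * y i| := by
      rw [abs_mul, abs_of_pos ht0]
    rw [h1, ← hΛy i]
    calc |Λ.mulVec y i| = |∑ j, Λ i j * y j| := rfl
      _ ≤ ∑ j, |Λ i j * y j| := Finset.abs_sum_le_sum_abs _ _
      _ = ∑ j, Λ i j * a j := by
          refine Finset.sum_congr rfl fun j _ => ?_
          rw [abs_mul, abs_of_nonneg (hΛnn i j)]
      _ = Λ.mulVec a i := rfl
  -- the auxiliary matrix T = (1 + Λ)^(r-1)
  set T : Matrix (Fin r) (Fin r) ℝ := (1 + Λ) ^ (r - 1) with hT_def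
  have hBnn : ∀ i j : Fin r, 0 ≤ (1 + Λ : Matrix (Fin r) (Fin r) ℝ) i j := by
    intro i j
    have h1 := hΛnn i j
    by_cases h : i = j
    · subst h; rw [Matrix.add_apply, Matrix.one_apply_eq]; linarith
    · rw [Matrix.add_apply, Matrix.one_apply_ne h]; linarith
  have hTnn : ∀ i j, 0 ≤ T i j := entries_nonneg_pow hBnn (r - 1)
  have hTlow : ∀ i j, δ ≤ T i j := by
    intro i j
    obtain ⟨p⟩ := hconn.preconnected i j
    have hlen : (p.toPath : (typeGraph Λ).Walk i j).length ≤ r - 1 := by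
      have h1 : (p.toPath : (typeGraph Λ).Walk i j).length < Fintype.card (Fin r) :=
        (p.toPath).2.length_lt
      rw [Fintype.card_fin] at h1
      omega
    exact walk_lower hΛnn hsym hε hsep (r - 1) i j _ hlen
  have hTup : ∀ i j, T i j ≤ C := by
    have hBub : ∀ i j : Fin r, (1 + Λ : Matrix (Fin r) (Fin r) ℝ) i j ≤ β := by
      intro i j
      have h1 : Λ i j ≤ 1 / ε := by
        rcases hsep i j with h | h
        · rw [h]; positivity
        · exact h.2
      by_cases h : i = j
      · subst h; rw [Matrix.add_apply, Matrix.one_apply_eq]; rw [hβ_def]; linarith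
      · rw [Matrix.add_apply, Matrix.one_apply_ne h]; rw [hβ_def]
        have : (0:ℝ) < 1/ε := by positivity
        linarith
    exact pow_upper hβ0 hBnn hBub (r - 1)
  set v : Fin r → ℝ := T.mulVec a with hv_def
  have hvlow : ∀ i, δ * Sy ≤ v i := by
    intro i
    calc δ * Sy = ∑ j, δ * a j := by rw [hSy_def, Finset.mul_sum]
      _ ≤ ∑ j, T i j * a j :=
          Finset.sum_le_sum fun j _ => mul_le_mul_of_nonneg_right (hTlow i j) (hann j)
      _ = v i := rfl
  have hvup : ∀ i, v i ≤ C * Sy := by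
    intro i
    calc v i = ∑ j, T i j * a j := rfl
      _ ≤ ∑ j, C * a j :=
          Finset.sum_le_sum fun j _ => mul_le_mul_of_nonneg_right (hTup i j) (hann j)
      _ = C * Sy := by rw [hSy_def, Finset.mul_sum]
  have hvnn : ∀ i, 0 ≤ v i := fun i => le_trans (by positivity) (hvlow i)
  -- pumping
  have hka : ∀ i, t ^ k * a i ≤ (Λ ^ k).mulVec a i := pump hΛnn ht0.le hΛa k
  have hkv : ∀ i, t ^ k * v i ≤ (Λ ^ k).mulVec v i := by
    have hcomm : Λ ^ k * T = T * Λ ^ k := by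
      have h1 : Commute Λ (1 + Λ) := (Commute.one_right Λ).add_right (Commute.refl Λ)
      exact h1.pow_pow k (r - 1)
    intro i
    have e1 : (Λ ^ k).mulVec v = T.mulVec ((Λ ^ k).mulVec a) := by
      rw [hv_def, Matrix.mulVec_mulVec, Matrix.mulVec_mulVec, hcomm]
    have e2 : T.mulVec (fun j => t ^ k * a j) i = t ^ k * v i := by
      have h1 : (fun j => t ^ k * a j) = (t ^ k) • a := rfl
      rw [h1, Matrix.mulVec_smul]
      rfl
    rw [e1, ← e2]
    exact mulVec_mono hTnn hka i
  -- the given vector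
  set w : Fin r → ℝ := fun i => s i * z i with hw_def
  have hwnn : ∀ i, 0 ≤ w i := fun i => mul_nonneg (hs i).le (hz i)
  set u : Fin r → ℝ := (Λ ^ k).mulVec w with hu_def
  have hunn : ∀ i, 0 ≤ u i := by
    intro i
    show 0 ≤ (Λ ^ k).mulVec w i
    simp only [Matrix.mulVec, dotProduct]
    exact Finset.sum_nonneg fun j _ => mul_nonneg (entries_nonneg_pow hΛnn k i j) (hwnn j)
  set Sw : ℝ := ∑ i, w i with hSw_def
  have hSwnn : 0 ≤ Sw := Finset.sum_nonneg fun i _ => hwnn i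
  set U : ℝ := euclNorm u with hU_def
  set W : ℝ := euclNorm w with hW_def
  set Z : ℝ := euclNorm z with hZ_def
  set P : ℝ := euclNorm ((mMat n Λ ^ k).mulVec z) with hP_def
  have hUnn : 0 ≤ U := Real.sqrt_nonneg _
  have hPnn : 0 ≤ P := Real.sqrt_nonneg _
  have hZnn : 0 ≤ Z := Real.sqrt_nonneg _
  have hWnn : 0 ≤ W := Real.sqrt_nonneg _
  have htk : 0 < t ^ k := pow_pos ht0 k
  -- step A
  have stepA : t ^ k * (δ * Sy) * Sw ≤ ∑ i, v i * u i := by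
    have h1 : ∑ i, v i * u i = ∑ i, (Λ ^ k).mulVec v i * w i := by
      rw [hu_def]
      exact dot_symm (hsym.pow k) v w
    rw [h1]
    calc t ^ k * (δ * Sy) * Sw = ∑ i, t ^ k * (δ * Sy) * w i := by
          rw [hSw_def, Finset.mul_sum]
      _ ≤ ∑ i, (Λ ^ k).mulVec v i * w i := by
          refine Finset.sum_le_sum fun i _ => mul_le_mul_of_nonneg_right ?_ (hwnn i)
          calc t ^ k * (δ * Sy) ≤ t ^ k * v i :=
                mul_le_mul_of_nonneg_left (hvlow i) htk.le
            _ ≤ (Λ ^ k).mulVec v i := hkv i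
  -- step B
  have hsumU : ∑ i, u i ≤ (r : ℝ) * U := by
    have h1 : (∑ i, u i) ^ 2 ≤ (Fintype.card (Fin r) : ℝ) * ∑ i, u i ^ 2 := by
      exact_mod_cast sq_sum_le_card_mul_sum_sq (s := Finset.univ) (f := u)
    have h2 : (euclNorm u) ^ 2 = ∑ i, u i ^ 2 := by
      rw [euclNorm, Real.sq_sqrt (Finset.sum_nonneg fun i _ => sq_nonneg _)]
    have h3 : (∑ i, u i) ^ 2 ≤ ((r : ℝ) * U) ^ 2 := by
      rw [Fintype.card_fin] at h1
      have : ((r:ℝ) * U) ^ 2 = (r:ℝ)^2 * U^2 := by ring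
      rw [this, hU_def, h2]
      nlinarith [Finset.sum_nonneg (fun i (_ : i ∈ Finset.univ) => sq_nonneg (u i))]
    have h4 : 0 ≤ ∑ i, u i := Finset.sum_nonneg fun i _ => hunn i
    calc ∑ i, u i = Real.sqrt ((∑ i, u i) ^ 2) := (Real.sqrt_sq h4).symm
      _ ≤ Real.sqrt (((r : ℝ) * U) ^ 2) := Real.sqrt_le_sqrt h3
      _ = (r : ℝ) * U := Real.sqrt_sq (by positivity)
  have stepB : ∑ i, v i * u i ≤ C * Sy * ((r : ℝ) * U) := by
    calc ∑ i, v i * u i ≤ ∑ i, C * Sy * u i :=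
        Finset.sum_le_sum fun i _ => mul_le_mul_of_nonneg_right (hvup i) (hunn i)
      _ = C * Sy * ∑ i, u i := by rw [← Finset.mul_sum]
      _ ≤ C * Sy * ((r : ℝ) * U) := by
          exact mul_le_mul_of_nonneg_left hsumU (mul_nonneg hC0.le hSy.le)
  -- step C: cancel Sy
  have stepC : t ^ k * δ * Sw ≤ (r : ℝ) * C * U := by
    have h1 : (t ^ k * δ * Sw) * Sy ≤ ((r : ℝ) * C * U) * Sy := by
      calc (t ^ k * δ * Sw) * Sy = t ^ k * (δ * Sy) * Sw := by ring
        _ ≤ ∑ i, v i * u i := stepA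
        _ ≤ C * Sy * ((r : ℝ) * U) := stepB
        _ = ((r : ℝ) * C * U) * Sy := by ring
    exact le_of_mul_le_mul_right h1 hSy
  -- step D
  have stepD : W ≤ Sw := by
    have h1 : ∑ i, w i ^ 2 ≤ Sw ^ 2 := by
      calc ∑ i, w i ^ 2 = ∑ i, w i * w i := by
            refine Finset.sum_congr rfl fun i _ => sq (w i) ▸ by ring
        _ ≤ ∑ i, w i * Sw := Finset.sum_le_sum fun i _ =>
            mul_le_mul_of_nonneg_left (Finset.single_le_sum
              (fun j (_ : j ∈ Finset.univ) => hwnn j) (Finset.mem_univ i)) (hwnn i)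
        _ = Sw * Sw := by rw [← Finset.sum_mul]
        _ = Sw ^ 2 := by ring
    rw [hW_def, euclNorm]
    calc Real.sqrt (∑ i, w i ^ 2) ≤ Real.sqrt (Sw ^ 2) := Real.sqrt_le_sqrt h1
      _ = Sw := Real.sqrt_sq hSwnn
  -- step E1 : U ≤ √A * s i0 * P
  have hsA : ∀ i, (n i : ℝ) ≤ (A : ℝ) * (n i0 : ℝ) := by
    intro i; exact_mod_cast hbal i i0
  have hsA0 : ∀ i, (n i0 : ℝ) ≤ (A : ℝ) * (n i : ℝ) := by
    intro i; exact_mod_cast hbal i0 i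
  have hMkz : ∀ i, (mMat n Λ ^ k).mulVec z i = u i / s i := by
    intro i
    rw [hpowMV k z]
  have hMkz' : ∀ i, u i = (mMat n Λ ^ k).mulVec z i * s i := by
    intro i
    rw [hMkz i]
    exact (div_mul_cancel₀ _ (hs i).ne').symm
  have stepE1 : U ≤ Real.sqrt A * s i0 * P := by
    have h1 : ∑ i, u i ^ 2 ≤ (A : ℝ) * (n i0 : ℝ) * ∑ i, (mMat n Λ ^ k).mulVec z i ^ 2 := by
      rw [Finset.mul_sum]
      refine Finset.sum_le_sum fun i _ => ?_
      rw [hMkz' i]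
      have h2 : ((mMat n Λ ^ k).mulVec z i * s i) ^ 2
          = (n i : ℝ) * (mMat n Λ ^ k).mulVec z i ^ 2 := by
        rw [mul_pow, sq (s i), hssq i]; ring
      rw [h2]
      exact mul_le_mul_of_nonneg_right (hsA i) (sq_nonneg _)
    have h3 : U ^ 2 ≤ (Real.sqrt A * s i0 * P) ^ 2 := by
      have e1 : U ^ 2 = ∑ i, u i ^ 2 := by
        rw [hU_def, euclNorm, Real.sq_sqrt (Finset.sum_nonneg fun i _ => sq_nonneg _)]
      have e2 : (Real.sqrt A * s i0 * P) ^ 2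
          = (A : ℝ) * (n i0 : ℝ) * ∑ i, (mMat n Λ ^ k).mulVec z i ^ 2 := by
        rw [mul_pow, mul_pow, Real.sq_sqrt (Nat.cast_nonneg A), sq (s i0), hssq i0,
          hP_def, euclNorm, Real.sq_sqrt (Finset.sum_nonneg fun i _ => sq_nonneg _)]
      rw [e1, e2]
      exact h1
    nlinarith [mul_nonneg (mul_nonneg (Real.sqrt_nonneg (A:ℝ)) (hs i0).le) hPnn]
  -- step E2 : s i0 * Z ≤ √A * W
  have stepE2 : s i0 * Z ≤ Real.sqrt A * W := by
    have h1 : (n i0 : ℝ) * ∑ i, z i ^ 2 ≤ (A : ℝ) * ∑ i, w i ^ 2 := by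
      rw [Finset.mul_sum, Finset.mul_sum]
      refine Finset.sum_le_sum fun i _ => ?_
      have h2 : w i ^ 2 = (n i : ℝ) * z i ^ 2 := by
        rw [hw_def]
        show (s i * z i) ^ 2 = (n i : ℝ) * z i ^ 2
        rw [mul_pow, sq (s i), hssq i]
      rw [h2, ← mul_assoc]
      exact mul_le_mul_of_nonneg_right (hsA0 i) (sq_nonneg _)
    have h3 : (s i0 * Z) ^ 2 ≤ (Real.sqrt A * W) ^ 2 := by
      have e1 : (s i0 * Z) ^ 2 = (n i0 : ℝ) * ∑ i, z i ^ 2 := by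
        rw [mul_pow, sq (s i0), hssq i0, hZ_def, euclNorm,
          Real.sq_sqrt (Finset.sum_nonneg fun i _ => sq_nonneg _)]
      have e2 : (Real.sqrt A * W) ^ 2 = (A : ℝ) * ∑ i, w i ^ 2 := by
        rw [mul_pow, Real.sq_sqrt (Nat.cast_nonneg A), hW_def, euclNorm,
          Real.sq_sqrt (Finset.sum_nonneg fun i _ => sq_nonneg _)]
      rw [e1, e2]
      exact h1
    nlinarith [mul_nonneg (Real.sqrt_nonneg (A:ℝ)) hWnn, mul_nonneg (hs i0).le hZnn]
  -- final assembly
  have hsqA : Real.sqrt A * Real.sqrt A = (A : ℝ) := Real.mul_self_sqrt (Nat.cast_nonneg A)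
  have hfin : t ^ k * δ * (s i0 * Z) ≤ (A : ℝ) * (r : ℝ) * C * (s i0 * P) := by
    calc t ^ k * δ * (s i0 * Z) ≤ t ^ k * δ * (Real.sqrt A * W) := by
          exact mul_le_mul_of_nonneg_left stepE2 (by positivity)
      _ ≤ t ^ k * δ * (Real.sqrt A * Sw) := by
          have := mul_le_mul_of_nonneg_left stepD (Real.sqrt_nonneg (A:ℝ))
          exact mul_le_mul_of_nonneg_left this (by positivity)
      _ = Real.sqrt A * (t ^ k * δ * Sw) := by ring
      _ ≤ Real.sqrt A * ((r : ℝ) * C * U) := by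
          exact mul_le_mul_of_nonneg_left stepC (Real.sqrt_nonneg _)
      _ ≤ Real.sqrt A * ((r : ℝ) * C * (Real.sqrt A * s i0 * P)) := by
          refine mul_le_mul_of_nonneg_left ?_ (Real.sqrt_nonneg _)
          exact mul_le_mul_of_nonneg_left stepE1 (by positivity)
      _ = (Real.sqrt A * Real.sqrt A) * ((r : ℝ) * C * (s i0 * P)) := by ring
      _ = (A : ℝ) * (r : ℝ) * C * (s i0 * P) := by rw [hsqA]; ring
  have hZP : t ^ k * δ * Z ≤ (A : ℝ) * (r : ℝ) * C * P := by
    have h1 : (t ^ k * δ * Z) * s i0 ≤ ((A : ℝ) * (r : ℝ) * C * P) * s i0 := by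
      calc (t ^ k * δ * Z) * s i0 = t ^ k * δ * (s i0 * Z) := by ring
        _ ≤ (A : ℝ) * (r : ℝ) * C * (s i0 * P) := hfin
        _ = ((A : ℝ) * (r : ℝ) * C * P) * s i0 := by ring
    exact le_of_mul_le_mul_right h1 (hs i0)
  -- t^k δ ≥ 2 r C (A+1) ≥ 2 A r C
  have htk2 : 2 * (A : ℝ) * (r : ℝ) * C ≤ t ^ k * δ := by
    have h1 : (1 + ε / 2) ^ k ≤ t ^ k := by
      apply pow_le_pow_left₀ (by linarith) htgt.le
    have h2 : δ * (1 + ε / 2) ^ k ≤ δ * t ^ k := mul_le_mul_of_nonneg_left h1 hδ0.le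
    have h3 : 2 * (r : ℝ) * C * (A + 1) ≤ δ * t ^ k := le_trans hkey h2
    nlinarith
  have hfinal : 2 * (A : ℝ) * (r : ℝ) * C * Z ≤ (A : ℝ) * (r : ℝ) * C * P := by
    calc 2 * (A : ℝ) * (r : ℝ) * C * Z ≤ (t ^ k * δ) * Z :=
        mul_le_mul_of_nonneg_right htk2 hZnn
      _ ≤ (A : ℝ) * (r : ℝ) * C * P := by
          calc (t ^ k * δ) * Z = t ^ k * δ * Z := by ring
            _ ≤ (A : ℝ) * (r : ℝ) * C * P := hZP
  have hArC : 0 < (A : ℝ) * (r : ℝ) * C := by positivity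
  nlinarith


end Pandemic
end

section
/- For all A, r ∈ ℕ and ε > 0 there exist δ > 0 and N ∈ ℕ such that the following holds. Suppose n = n_1+⋯+n_r ≥ N, (n_1,…,n_r) is A-balanced, Λ is connected and ε-separated, and ρ(M) ≥ 1 + ε. Then there is no vector α ∈ [0,1]^r with α ≠ (1,…,1) satisfying f(α) = α and α_i ≥ 1 − δ for all i ∈ [r]. (Equivalently, every fixed point of f in [0,1]^r other than the all-ones vector has some coordinate at most 1 − δ.) -/
open MeasureTheory Matrix

namespace Pandemic

variable {r : ℕ}

/-- The multi-type binomial probability generating function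
`f_i(z) = ∏_ℓ ((1 - p_{iℓ}) + p_{iℓ} z_ℓ)^{n_ℓ}`. -/
noncomputable def genF (n : Fin r → ℕ) (Λ : Matrix (Fin r) (Fin r) ℝ)
    (z : Fin r → ℝ) (i : Fin r) : ℝ :=
  ∏ l, ((1 - pMat n Λ i l) + pMat n Λ i l * z l) ^ (n l)

private lemma exp_neg_le_quad {y : ℝ} (hy : 0 ≤ y) : Real.exp (-y) ≤ 1 - y + y ^ 2 := by
  have h1 : y + 1 ≤ Real.exp y := Real.add_one_le_exp y
  have h3 : 0 < Real.exp (-y) := Real.exp_pos (-y)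
  have h2 : Real.exp (-y) * Real.exp y = 1 := by rw [← Real.exp_add]; simp
  nlinarith [mul_le_mul_of_nonneg_left h1 h3.le, mul_nonneg (mul_nonneg hy hy) hy]

set_option maxHeartbeats 2000000 in
/-- in the super-critical case, every fixed point of `f` in `[0,1]^r` other
than the all-ones vector has some coordinate at most `1 - δ`. -/
theorem fixed_point_coordinate_bound (A r : ℕ) (ε : ℝ) (hε : 0 < ε) :
    ∃ δ > 0, ∃ N : ℕ, ∀ (n : Fin r → ℕ) (Λ : Matrix (Fin r) (Fin r) ℝ),
      (∀ i, 0 < n i) → Λ.IsSymm → (∀ i j, 0 ≤ Λ i j) →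
      (∀ i j, pMat n Λ i j ≤ 1) →
      N ≤ ∑ k, n k → Balanced A n → ConnectedTypes Λ → Separated ε Λ →
      1 + ε ≤ maxEig (mMat n Λ) →
      ∀ α : Fin r → ℝ, (∀ i, 0 ≤ α i ∧ α i ≤ 1) →
        (∀ i, genF n Λ α i = α i) → α ≠ (fun _ => 1) →
        ∃ i, α i ≤ 1 - δ := by
  have hden : (0:ℝ) < (2 + ε) * ((r:ℝ) * ((A:ℝ) + 1) + 1) :=
    mul_pos (by linarith) (by positivity)
  refine ⟨ε ^ 2 / ((2 + ε) * ((r:ℝ) * ((A:ℝ) + 1) + 1)),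
    div_pos (by positivity) hden, 0, ?_⟩
  set δ : ℝ := ε ^ 2 / ((2 + ε) * ((r:ℝ) * ((A:ℝ) + 1) + 1)) with hδdef
  have hδpos : 0 < δ := div_pos (by positivity) hden
  intro n Λ hn hsymm hΛnn hple hN hbal hconn hsep hρ α hα hfix hne
  by_contra hcontra
  push_neg at hcontra
  haveI : Nonempty (Fin r) := hconn.nonempty
  set x : Fin r → ℝ := fun i => 1 - α i with hxdef
  have hx0 : ∀ i, 0 ≤ x i := fun i => by
    have := (hα i).2; simp only [hxdef]; linarith
  have hxδ : ∀ i, x i ≤ δ := fun i => by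
    have := hcontra i; simp only [hxdef]; linarith
  have hpnn : ∀ i j, 0 ≤ pMat n Λ i j := fun i j =>
    div_nonneg (hΛnn i j) (Real.sqrt_nonneg _)
  set M : Matrix (Fin r) (Fin r) ℝ := mMat n Λ with hMdef
  have hMnn : ∀ i j, 0 ≤ M i j := fun i j => mul_nonneg (hpnn i j) (Nat.cast_nonneg _)
  have hMub : ∀ i j, M i j ≤ ((A:ℝ) + 1) / ε := by
    intro i j
    rcases hsep i j with h0 | ⟨hlo, hhi⟩
    · have hMij : M i j = 0 := by simp [hMdef, mMat, pMat, h0]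
      rw [hMij]; positivity
    · set s : ℝ := Real.sqrt ((n i : ℝ) * (n j : ℝ)) with hsdef
      have hni : (0:ℝ) < (n i : ℝ) := by exact_mod_cast hn i
      have hnj' : (0:ℝ) < (n j : ℝ) := by exact_mod_cast hn j
      have hspos : 0 < s := Real.sqrt_pos.mpr (by positivity)
      have hssq : s ^ 2 = (n i : ℝ) * (n j : ℝ) := Real.sq_sqrt (by positivity)
      have hbalji : (n j : ℝ) ≤ (A:ℝ) * (n i : ℝ) := by exact_mod_cast hbal j i
      have hA0 : (0:ℝ) ≤ (A:ℝ) := Nat.cast_nonneg A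
      have hsq2 : ((n j : ℝ)) ^ 2 ≤ (((A:ℝ) + 1) * s) ^ 2 := by
        rw [mul_pow, hssq]
        nlinarith [mul_le_mul_of_nonneg_left hbalji hnj'.le,
          mul_nonneg (mul_nonneg hA0 hni.le) hnj'.le,
          mul_nonneg (mul_nonneg (mul_nonneg hA0 hA0) hni.le) hnj'.le,
          mul_nonneg hni.le hnj'.le]
      have hnjs : (n j : ℝ) ≤ ((A:ℝ) + 1) * s := by
        nlinarith [mul_pos hspos hspos]
      have hΛε : Λ i j * ε ≤ 1 := by
        have := hhi
        rw [le_div_iff₀ hε] at this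
        linarith
      have hMeq : M i j = Λ i j * (n j : ℝ) / s := by
        simp [hMdef, mMat, pMat, hsdef, div_mul_eq_mul_div]
      rw [hMeq, div_le_div_iff₀ hspos hε]
      nlinarith [mul_le_mul_of_nonneg_right hΛε hnj'.le]
  set y : Fin r → ℝ := fun i => ∑ l, M i l * x l with hydef
  have hynn : ∀ i, 0 ≤ y i := fun i =>
    Finset.sum_nonneg fun l _ => mul_nonneg (hMnn i l) (hx0 l)
  set E : ℝ := ε / (2 + ε) with hEdef
  have hEpos : 0 < E := div_pos hε (by linarith)
  have hE1 : E < 1 := by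
    rw [hEdef, div_lt_one (by linarith)]; linarith
  have hyE : ∀ i, y i ≤ E := by
    intro i
    have h1 : y i ≤ ∑ _l : Fin r, (((A:ℝ) + 1) / ε) * δ := by
      refine Finset.sum_le_sum fun l _ => ?_
      exact mul_le_mul (hMub i l) (hxδ l) (hx0 l) (by positivity)
    rw [Finset.sum_const, Finset.card_univ, Fintype.card_fin, nsmul_eq_mul] at h1
    have h2 : (r:ℝ) * ((((A:ℝ) + 1) / ε) * δ) ≤ E := by
      have hB : (0:ℝ) < (r:ℝ) * ((A:ℝ) + 1) + 1 := by positivity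
      have h2e : (0:ℝ) < 2 + ε := by linarith
      have heq : (r:ℝ) * ((((A:ℝ) + 1) / ε) * δ)
          = ((r:ℝ) * ((A:ℝ) + 1)) / ((r:ℝ) * ((A:ℝ) + 1) + 1) * E := by
        rw [hδdef, hEdef]
        field_simp
      rw [heq]
      have hle : ((r:ℝ) * ((A:ℝ) + 1)) / ((r:ℝ) * ((A:ℝ) + 1) + 1) ≤ 1 := by
        rw [div_le_one hB]; linarith
      nlinarith [hEpos, div_nonneg (by positivity : (0:ℝ) ≤ (r:ℝ) * ((A:ℝ) + 1)) hB.le]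
    linarith
  have hxy : ∀ i, y i * (1 - E) ≤ x i := by
    intro i
    have hub : α i ≤ Real.exp (-(y i)) := by
      calc α i = genF n Λ α i := (hfix i).symm
        _ = ∏ l, ((1 - pMat n Λ i l) + pMat n Λ i l * α l) ^ (n l) := rfl
        _ ≤ ∏ l, Real.exp (-(M i l * x l)) := by
            refine Finset.prod_le_prod (fun l _ => ?_) (fun l _ => ?_)
            · apply pow_nonneg
              nlinarith [hpnn i l, hple i l, (hα l).1, (hα l).2]
            · have hxl : x l = 1 - α l := rfl
              have hMeq : M i l * x l = pMat n Λ i l * (n l : ℝ) * x l := rfl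
              have hxeq : -(pMat n Λ i l * x l) + 1
                  = (1 - pMat n Λ i l) + pMat n Λ i l * α l := by
                rw [hxl]; ring
              have h1 : (1 - pMat n Λ i l) + pMat n Λ i l * α l
                  ≤ Real.exp (-(pMat n Λ i l * x l)) := by
                rw [← hxeq]; exact Real.add_one_le_exp _
              have hnn : 0 ≤ (1 - pMat n Λ i l) + pMat n Λ i l * α l := by
                nlinarith [hpnn i l, hple i l, (hα l).1, (hα l).2]
              calc ((1 - pMat n Λ i l) + pMat n Λ i l * α l) ^ (n l)
                  ≤ (Real.exp (-(pMat n Λ i l * x l))) ^ (n l) :=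
                    pow_le_pow_left₀ hnn h1 (n l)
                _ = Real.exp (-(M i l * x l)) := by
                    rw [← Real.exp_nat_mul]
                    congr 1
                    rw [hMeq]; ring
        _ = Real.exp (-(y i)) := by
            rw [← Real.exp_sum]
            congr 1
            simp only [hydef]
            rw [← Finset.sum_neg_distrib]
    have hq := exp_neg_le_quad (hynn i)
    have hxi : x i = 1 - α i := rfl
    nlinarith [hyE i, hynn i, mul_le_mul_of_nonneg_left (hyE i) (hynn i)]
  have hsym' : ∀ a b, Λ a b = Λ b a := fun a b => hsymm.apply b a
  have hstep : ∀ {a b : Fin r}, (typeGraph Λ).Adj a b → 0 < x a → 0 < x b := by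
    intro a b hab hxa
    by_contra hb
    push_neg at hb
    have hxb : x b = 0 := le_antisymm hb (hx0 b)
    have hyb : y b = 0 := by
      have h1 : y b * (1 - E) ≤ 0 := hxb ▸ hxy b
      have h2 : 0 ≤ y b * (1 - E) := mul_nonneg (hynn b) (by linarith)
      have h3 : y b * (1 - E) = 0 := le_antisymm h1 h2
      rcases mul_eq_zero.mp h3 with h | h
      · exact h
      · exfalso; linarith
    have hterm : ∀ l ∈ Finset.univ, M b l * x l = 0 :=
      (Finset.sum_eq_zero_iff_of_nonneg
        (fun l _ => mul_nonneg (hMnn b l) (hx0 l))).mp hyb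
    have hΛba : 0 < Λ b a := by
      rcases hab.2 with h | h
      · rw [← hsym' a b]; exact h
      · exact h
    have hni : (0:ℝ) < (n b : ℝ) := by exact_mod_cast hn b
    have hna : (0:ℝ) < (n a : ℝ) := by exact_mod_cast hn a
    have hMba : 0 < M b a :=
      mul_pos (div_pos hΛba (Real.sqrt_pos.mpr (by positivity))) hna
    have := hterm a (Finset.mem_univ a)
    nlinarith [mul_pos hMba hxa]
  have hxne : ∃ j, 0 < x j := by
    by_contra h
    push_neg at h
    apply hne
    funext i
    have h1 : x i = 0 := le_antisymm (h i) (hx0 i)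
    rw [hxdef] at h1
    simp only at h1
    show α i = 1
    linarith
  obtain ⟨j, hj⟩ := hxne
  clear_value δ x M y E
  have hwalk : ∀ {a b : Fin r}, (typeGraph Λ).Walk a b → 0 < x a → 0 < x b := by
    intro a b w
    induction w with
    | nil => exact id
    | cons h _ ih => exact fun ha => ih (hstep h ha)
  have hxpos : ∀ i, 0 < x i := by
    intro i
    obtain ⟨w⟩ := hconn.preconnected j i
    exact hwalk w hj
  have hxyE : ∀ i, y i ≤ (1 + ε / 2) * x i := by
    intro i
    have h := hxy i
    have h1E : 1 - E = 2 / (2 + ε) := by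
      rw [hEdef]
      field_simp
      ring
    rw [h1E] at h
    have h2 : (0:ℝ) < 2 + ε := by linarith
    have h3 : y i * 2 ≤ x i * (2 + ε) := by
      have h' : (y i * 2) / (2 + ε) ≤ x i := by
        rw [show (y i * 2) / (2 + ε) = y i * (2 / (2 + ε)) by ring]; exact h
      exact (div_le_iff₀ h2).mp h'
    nlinarith [hx0 i, h3, mul_nonneg hε.le (hx0 i)]
  have heig : ∀ t, Module.End.HasEigenvalue (Matrix.toLin' M) t → t ≤ 1 + ε / 2 := by
    intro t ht
    obtain ⟨v, hv⟩ := ht.exists_hasEigenvector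
    have hvne : v ≠ 0 := hv.right
    have hMv : M.mulVec v = t • v := by
      have h := hv.apply_eq_smul
      rwa [Matrix.toLin'_apply] at h
    obtain ⟨i0, -, hi0⟩ := Finset.exists_max_image Finset.univ (fun i => |v i| / x i)
      ⟨Classical.arbitrary _, Finset.mem_univ _⟩
    set sm : ℝ := |v i0| / x i0 with hsmdef
    have hvb : ∀ l, |v l| ≤ sm * x l := by
      intro l
      have h1 := hi0 l (Finset.mem_univ l)
      have hxl := hxpos l
      calc |v l| = (|v l| / x l) * x l := (div_mul_cancel₀ _ (hxpos l).ne').symm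
        _ ≤ sm * x l := mul_le_mul_of_nonneg_right h1 hxl.le
    have hvi0 : |v i0| = sm * x i0 := by
      rw [hsmdef, div_mul_cancel₀ _ (hxpos i0).ne']
    have hspos : 0 < sm := by
      obtain ⟨k, hk⟩ : ∃ k, v k ≠ 0 := Function.ne_iff.mp hvne
      have h1 : 0 < |v k| / x k := div_pos (abs_pos.mpr hk) (hxpos k)
      exact lt_of_lt_of_le h1 (hi0 k (Finset.mem_univ k))
    have key : |t| * (sm * x i0) ≤ (1 + ε / 2) * (sm * x i0) := by
      calc |t| * (sm * x i0) = |t| * |v i0| := by rw [hvi0]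
        _ = |t * v i0| := (abs_mul t (v i0)).symm
        _ = |(M.mulVec v) i0| := by rw [hMv]; simp
        _ = |∑ l, M i0 l * v l| := by
            simp [Matrix.mulVec, dotProduct]
        _ ≤ ∑ l, |M i0 l * v l| := Finset.abs_sum_le_sum_abs _ _
        _ ≤ ∑ l, M i0 l * (sm * x l) := by
            refine Finset.sum_le_sum fun l _ => ?_
            rw [abs_mul, abs_of_nonneg (hMnn i0 l)]
            exact mul_le_mul_of_nonneg_left (hvb l) (hMnn i0 l)
        _ = sm * y i0 := by
            simp only [hydef]
            rw [Finset.mul_sum]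
            exact Finset.sum_congr rfl fun l _ => by ring
        _ ≤ sm * ((1 + ε / 2) * x i0) :=
            mul_le_mul_of_nonneg_left (hxyE i0) hspos.le
        _ = (1 + ε / 2) * (sm * x i0) := by ring
    have hsx : 0 < sm * x i0 := mul_pos hspos (hxpos i0)
    have habs : |t| ≤ 1 + ε / 2 := le_of_mul_le_mul_right key hsx
    exact le_trans (le_abs_self t) habs
  have hmax : maxEig M ≤ 1 + ε / 2 := by
    unfold maxEig
    exact Real.sSup_le (fun t ht => heig t ht) (by linarith)
  linarith


end Pandemic
end

section
/- For all A, r ∈ ℕ and ε > 0 there exists N ∈ ℕ such that the following holds. Suppose n = n_1+⋯+n_r ≥ N, (n_1,…,n_r) is A-balanced, Λ is ε-separated, and ρ(M) ≥ 1 + ε. Define the matrix Q by Q_{i,j} = (n_j − n^{0.999})·p_{i,j}. Then |ρ(M) − ρ(Q)| ≤ ε/2; in particular ρ(Q) ≥ 1 + ε/2. -/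
open MeasureTheory Matrix

namespace Pandemic

variable {r : ℕ}

/- ===== auxiliary lemmas ===== -/

lemma hasEig_toLin'_iff (B : Matrix (Fin r) (Fin r) ℝ) (t : ℝ) :
    Module.End.HasEigenvalue (Matrix.toLin' B) t ↔
      ∃ v : Fin r → ℝ, v ≠ 0 ∧ B.mulVec v = t • v := by
  constructor
  · intro h
    obtain ⟨v, hv⟩ := h.exists_hasEigenvector
    exact ⟨v, hv.2, by simpa [Matrix.toLin'_apply] using hv.apply_eq_smul⟩
  · rintro ⟨v, hv0, hv⟩
    exact Module.End.hasEigenvalue_of_hasEigenvector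
      ⟨Module.End.mem_eigenspace_iff.2 (by simpa [Matrix.toLin'_apply] using hv), hv0⟩

lemma hasEig_toEuc_iff (B : Matrix (Fin r) (Fin r) ℝ) (t : ℝ) :
    Module.End.HasEigenvalue (Matrix.toEuclideanLin B) t ↔
      ∃ v : Fin r → ℝ, v ≠ 0 ∧ B.mulVec v = t • v := by
  constructor
  · intro h
    obtain ⟨v, hv⟩ := h.exists_hasEigenvector
    have := hv.apply_eq_smul
    refine ⟨(WithLp.equiv 2 _) v, ?_, ?_⟩
    · simpa using hv.2
    · have := congrArg (WithLp.equiv 2 (Fin r → ℝ)) this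
      simpa [Matrix.ofLp_toEuclideanLin_apply] using this
  · rintro ⟨v, hv0, hv⟩
    refine Module.End.hasEigenvalue_of_hasEigenvector (x := (WithLp.equiv 2 _).symm v)
      ⟨Module.End.mem_eigenspace_iff.2 ?_, by simpa using hv0⟩
    have := congrArg (WithLp.equiv 2 (Fin r → ℝ)).symm hv
    simpa [Matrix.toEuclideanLin_apply_piLp_toLp] using this

lemma eig_conj_aux (d : Fin r → ℝ) (hd : ∀ i, d i ≠ 0) (B : Matrix (Fin r) (Fin r) ℝ) (t : ℝ)
    (h : Module.End.HasEigenvalue (Matrix.toLin' B) t) :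
    Module.End.HasEigenvalue (Matrix.toLin' (Matrix.of fun i j => d i * B i j * (d j)⁻¹)) t := by
  rw [hasEig_toLin'_iff] at h ⊢
  obtain ⟨v, hv0, hv⟩ := h
  refine ⟨fun i => d i * v i, ?_, ?_⟩
  · obtain ⟨i, hi⟩ := Function.ne_iff.1 hv0
    exact Function.ne_iff.2 ⟨i, by simpa using mul_ne_zero (hd i) hi⟩
  · funext i
    have hBv := congrFun hv i
    simp only [Matrix.mulVec, dotProduct, Matrix.of_apply, Pi.smul_apply,
      smul_eq_mul] at hBv ⊢
    calc ∑ j, d i * B i j * (d j)⁻¹ * (d j * v j) = ∑ j, d i * (B i j * v j) := by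
          refine Finset.sum_congr rfl fun j _ => ?_
          rw [mul_comm (d j) (v j), ← mul_assoc, mul_assoc _ (v j) _, mul_comm (v j),
            ← mul_assoc, mul_assoc _ ((d j)⁻¹) (d j), inv_mul_cancel₀ (hd j)]
          ring
      _ = d i * ∑ j, B i j * v j := by rw [Finset.mul_sum]
      _ = t * (d i * v i) := by rw [hBv]; ring

lemma eig_conj (d : Fin r → ℝ) (hd : ∀ i, d i ≠ 0) (B : Matrix (Fin r) (Fin r) ℝ) (t : ℝ) :
    Module.End.HasEigenvalue (Matrix.toLin' (Matrix.of fun i j => d i * B i j * (d j)⁻¹)) t ↔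
      Module.End.HasEigenvalue (Matrix.toLin' B) t := by
  constructor
  · intro h
    have := eig_conj_aux (fun i => (d i)⁻¹) (fun i => inv_ne_zero (hd i)) _ t h
    convert this using 3
    funext i j
    simp only [Matrix.of_apply]
    rw [inv_inv, mul_assoc, mul_assoc, inv_mul_cancel₀ (hd j), mul_one,
      inv_mul_cancel_left₀ (hd i)]
  · exact eig_conj_aux d hd B t

lemma maxEig_conj (d : Fin r → ℝ) (hd : ∀ i, d i ≠ 0) (B : Matrix (Fin r) (Fin r) ℝ) :
    maxEig (Matrix.of fun i j => d i * B i j * (d j)⁻¹) = maxEig B := by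
  unfold maxEig
  congr 1
  ext t
  exact eig_conj d hd B t

noncomputable def supRay (B : Matrix (Fin r) (Fin r) ℝ) : ℝ :=
  ⨆ x : {x : EuclideanSpace ℝ (Fin r) // x ≠ 0},
    RCLike.re (inner ℝ (Matrix.toEuclideanLin B x) (x : EuclideanSpace ℝ (Fin r)) : ℝ) /
      ‖(x : EuclideanSpace ℝ (Fin r))‖ ^ 2

lemma re_inner_toEuc (B : Matrix (Fin r) (Fin r) ℝ) (x : EuclideanSpace ℝ (Fin r)) :
    RCLike.re (inner ℝ (Matrix.toEuclideanLin B x) x : ℝ) = ∑ i, B.mulVec x i * x i := by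
  simp only [Matrix.toEuclideanLin_apply, PiLp.inner_apply, RCLike.inner_apply, RCLike.re_to_real]
  refine Finset.sum_congr rfl fun i _ => ?_
  rw [mul_comm]
  simp only [starRingEnd_apply, star_trivial]

lemma norm_sq_eq (x : EuclideanSpace ℝ (Fin r)) : ‖x‖ ^ 2 = ∑ i, x i ^ 2 := by
  rw [EuclideanSpace.norm_eq, Real.sq_sqrt (by positivity)]
  simp [sq_abs]

lemma inner_toEuc_le (hr : 0 < r) (B : Matrix (Fin r) (Fin r) ℝ) {C : ℝ}
    (hC : ∀ i j, |B i j| ≤ C) (x : EuclideanSpace ℝ (Fin r)) :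
    RCLike.re (inner ℝ (Matrix.toEuclideanLin B x) x : ℝ) ≤ r * C * ‖x‖ ^ 2 := by
  have hC0 : (0:ℝ) ≤ C := le_trans (abs_nonneg _) (hC ⟨0, hr⟩ ⟨0, hr⟩)
  rw [re_inner_toEuc, norm_sq_eq]
  calc ∑ i, B.mulVec x i * x i ≤ ∑ i, ∑ j, C * (|x i| * |x j|) := by
        refine Finset.sum_le_sum fun i _ => ?_
        rw [Matrix.mulVec, dotProduct, Finset.sum_mul]
        refine Finset.sum_le_sum fun j _ => ?_
        calc B i j * x j * x i ≤ |B i j * x j * x i| := le_abs_self _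
          _ = |B i j| * (|x i| * |x j|) := by rw [abs_mul, abs_mul]; ring
          _ ≤ C * (|x i| * |x j|) :=
              mul_le_mul_of_nonneg_right (hC i j) (by positivity)
    _ = C * ((∑ i, |x i|) * (∑ j, |x j|)) := by
        rw [Finset.sum_mul_sum, Finset.mul_sum]
        exact Finset.sum_congr rfl fun i _ => by rw [Finset.mul_sum]
    _ = C * (∑ i, |x i|) ^ 2 := by ring
    _ ≤ C * (r * ∑ i, |x i| ^ 2) := by
        refine mul_le_mul_of_nonneg_left ?_ hC0
        have := sq_sum_le_card_mul_sum_sq (s := (Finset.univ : Finset (Fin r)))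
          (f := fun i => |x i|)
        simpa using this
    _ = r * C * ∑ i, x i ^ 2 := by simp_rw [sq_abs]; ring

lemma rayBdd (S : Matrix (Fin r) (Fin r) ℝ) :
    BddAbove (Set.range fun x : {x : EuclideanSpace ℝ (Fin r) // x ≠ 0} =>
      RCLike.re (inner ℝ (Matrix.toEuclideanLin S x) (x : EuclideanSpace ℝ (Fin r)) : ℝ) /
        ‖(x : EuclideanSpace ℝ (Fin r))‖ ^ 2) := by
  set T := Matrix.toEuclideanLin S
  refine ⟨‖LinearMap.toContinuousLinearMap T‖, ?_⟩
  rintro y ⟨x, rfl⟩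
  have hx : (0:ℝ) < ‖(x : EuclideanSpace ℝ (Fin r))‖ ^ 2 := by
    have h2 : (0:ℝ) < ‖(x : EuclideanSpace ℝ (Fin r))‖ := norm_pos_iff.2 x.2
    positivity
  rw [div_le_iff₀ hx]
  calc RCLike.re (inner ℝ (T x) (x : EuclideanSpace ℝ (Fin r)) : ℝ)
      ≤ ‖(inner ℝ (T x) (x : EuclideanSpace ℝ (Fin r)) : ℝ)‖ := le_abs_self _
    _ ≤ ‖T x‖ * ‖(x : EuclideanSpace ℝ (Fin r))‖ := norm_inner_le_norm _ _
    _ = ‖LinearMap.toContinuousLinearMap T x‖ * ‖(x : EuclideanSpace ℝ (Fin r))‖ := rfl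
    _ ≤ (‖LinearMap.toContinuousLinearMap T‖ * ‖(x : EuclideanSpace ℝ (Fin r))‖) *
          ‖(x : EuclideanSpace ℝ (Fin r))‖ :=
        mul_le_mul_of_nonneg_right (ContinuousLinearMap.le_opNorm _ _) (norm_nonneg _)
    _ = ‖LinearMap.toContinuousLinearMap T‖ * ‖(x : EuclideanSpace ℝ (Fin r))‖ ^ 2 := by ring

lemma maxEig_symm (hr : 0 < r) (S : Matrix (Fin r) (Fin r) ℝ) (hS : S.IsHermitian) :
    maxEig S = supRay S := by
  haveI : Nontrivial (EuclideanSpace ℝ (Fin r)) :=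
    ⟨EuclideanSpace.single ⟨0, hr⟩ 1, 0, by
      intro h
      have := congrArg (fun x : EuclideanSpace ℝ (Fin r) => x ⟨0, hr⟩) h
      simp at this⟩
  have hSym : (Matrix.toEuclideanLin S).IsSymmetric := Matrix.isHermitian_iff_isSymmetric.1 hS
  have hEig : Module.End.HasEigenvalue (Matrix.toEuclideanLin S) (supRay S) := by
    have := hSym.hasEigenvalue_iSup_of_finiteDimensional
    simpa [supRay] using this
  have hbdd := rayBdd S
  have hub : ∀ t ∈ {t : ℝ | Module.End.HasEigenvalue (Matrix.toLin' S) t}, t ≤ supRay S := by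
    intro t ht
    rw [Set.mem_setOf_eq, hasEig_toLin'_iff, ← hasEig_toEuc_iff] at ht
    obtain ⟨v, hv⟩ := ht.exists_hasEigenvector
    have hvne : (v : EuclideanSpace ℝ (Fin r)) ≠ 0 := hv.2
    have hveq : Matrix.toEuclideanLin S v = t • v := hv.apply_eq_smul
    have hray : RCLike.re (inner ℝ (Matrix.toEuclideanLin S v)
        (v : EuclideanSpace ℝ (Fin r)) : ℝ) / ‖(v : EuclideanSpace ℝ (Fin r))‖ ^ 2 = t := by
      rw [hveq, real_inner_smul_left, real_inner_self_eq_norm_sq, RCLike.re_to_real]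
      have : ‖(v : EuclideanSpace ℝ (Fin r))‖ ^ 2 ≠ 0 := by
        have : (0:ℝ) < ‖(v : EuclideanSpace ℝ (Fin r))‖ := norm_pos_iff.2 hvne
        positivity
      field_simp
    calc t = _ := hray.symm
      _ ≤ supRay S := le_ciSup hbdd (⟨v, hvne⟩ : {x : EuclideanSpace ℝ (Fin r) // x ≠ 0})
  have hmem : supRay S ∈ {t : ℝ | Module.End.HasEigenvalue (Matrix.toLin' S) t} := by
    rw [Set.mem_setOf_eq, hasEig_toLin'_iff, ← hasEig_toEuc_iff]
    exact hEig
  exact le_antisymm (csSup_le ⟨_, hmem⟩ hub) (le_csSup ⟨_, hub⟩ hmem)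

lemma supRay_le_add (hr : 0 < r) (S S' : Matrix (Fin r) (Fin r) ℝ) {C : ℝ}
    (hd : ∀ i j, |S i j - S' i j| ≤ C) : supRay S ≤ supRay S' + r * C := by
  haveI : Nonempty {x : EuclideanSpace ℝ (Fin r) // x ≠ 0} :=
    ⟨⟨EuclideanSpace.single ⟨0, hr⟩ 1, by
      intro h
      have := congrArg (fun x : EuclideanSpace ℝ (Fin r) => x ⟨0, hr⟩) h
      simp at this⟩⟩
  refine ciSup_le fun x => ?_
  have hx2 : (0:ℝ) < ‖(x : EuclideanSpace ℝ (Fin r))‖ ^ 2 := by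
    have h2 : (0:ℝ) < ‖(x : EuclideanSpace ℝ (Fin r))‖ := norm_pos_iff.2 x.2
    positivity
  have hsplit : RCLike.re (inner ℝ (Matrix.toEuclideanLin S x)
        (x : EuclideanSpace ℝ (Fin r)) : ℝ) =
      RCLike.re (inner ℝ (Matrix.toEuclideanLin S' x) (x : EuclideanSpace ℝ (Fin r)) : ℝ) +
      RCLike.re (inner ℝ (Matrix.toEuclideanLin (S - S') x) (x : EuclideanSpace ℝ (Fin r)) : ℝ) := by
    have h1 : Matrix.toEuclideanLin S x
        = Matrix.toEuclideanLin S' x + Matrix.toEuclideanLin (S - S') x := by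
      have h0 : S' + (S - S') = S := add_sub_cancel _ _
      rw [← h0, map_add]
      simp
    rw [h1, inner_add_left]
    simp
  rw [hsplit, add_div]
  have hb : RCLike.re (inner ℝ (Matrix.toEuclideanLin (S - S') x)
      (x : EuclideanSpace ℝ (Fin r)) : ℝ) / ‖(x : EuclideanSpace ℝ (Fin r))‖ ^ 2 ≤ r * C := by
    rw [div_le_iff₀ hx2]
    exact inner_toEuc_le hr _ (by simpa [Matrix.sub_apply] using hd) _
  have ha : RCLike.re (inner ℝ (Matrix.toEuclideanLin S' x)
      (x : EuclideanSpace ℝ (Fin r)) : ℝ) / ‖(x : EuclideanSpace ℝ (Fin r))‖ ^ 2 ≤ supRay S' :=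
    le_ciSup (rayBdd S') x
  linarith

lemma abs_supRay_sub_le (hr : 0 < r) (S S' : Matrix (Fin r) (Fin r) ℝ) {C : ℝ}
    (hd : ∀ i j, |S i j - S' i j| ≤ C) : |supRay S - supRay S'| ≤ r * C := by
  have h2 := supRay_le_add hr S' S (C := C) (fun i j => by rw [abs_sub_comm]; exact hd i j)
  have h1 := supRay_le_add hr S S' hd
  rw [abs_sub_le_iff]
  exact ⟨by linarith, by linarith⟩

lemma maxEig_fin_zero (M : Matrix (Fin 0) (Fin 0) ℝ) : maxEig M = 0 := by
  unfold maxEig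
  have : {t : ℝ | Module.End.HasEigenvalue (Matrix.toLin' M) t} = ∅ := by
    ext t
    simp only [Set.mem_setOf_eq, Set.mem_empty_iff_false, iff_false]
    rw [hasEig_toLin'_iff]
    rintro ⟨v, hv0, -⟩
    exact hv0 (Subsingleton.elim _ _)
  rw [this, Real.sSup_empty]

lemma one_sub_mul_le_aux {a b : ℝ} (ha0 : 0 ≤ a) (ha1 : a ≤ 1) (hb0 : 0 ≤ b) (hb1 : b ≤ 1) :
    1 - a*b ≤ (1 - a^2) + (1 - b^2) := by
  nlinarith [mul_nonneg (sub_nonneg.2 ha1) (sub_nonneg.2 hb1),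
    mul_nonneg ha0 (sub_nonneg.2 ha1), mul_nonneg hb0 (sub_nonneg.2 hb1)]

lemma one_sub_mul_nonneg_aux {a b : ℝ} (ha0 : 0 ≤ a) (ha1 : a ≤ 1) (hb0 : 0 ≤ b) (hb1 : b ≤ 1) :
    0 ≤ 1 - a*b := by nlinarith

set_option maxHeartbeats 1000000 in
/-- with `Q_{ij} = (n_j - n^{0.999})·p_{ij}`, we have
`|ρ(M) - ρ(Q)| ≤ ε/2`; in particular `ρ(Q) ≥ 1 + ε/2`. -/
theorem depleted_matrix_still_supercritical (A r : ℕ) (ε : ℝ) (hε : 0 < ε) :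
    ∃ N : ℕ, ∀ (n : Fin r → ℕ) (Λ : Matrix (Fin r) (Fin r) ℝ),
      (∀ i, 0 < n i) → Λ.IsSymm → (∀ i j, 0 ≤ Λ i j) →
      N ≤ ∑ k, n k → Balanced A n → Separated ε Λ →
      1 + ε ≤ maxEig (mMat n Λ) →
      |maxEig (mMat n Λ) -
          maxEig (fun i j =>
            ((n j : ℝ) - ((∑ k, n k : ℕ) : ℝ) ^ (0.999 : ℝ)) * pMat n Λ i j)| ≤ ε / 2 ∧
      1 + ε / 2 ≤
        maxEig (fun i j =>
          ((n j : ℝ) - ((∑ k, n k : ℕ) : ℝ) ^ (0.999 : ℝ)) * pMat n Λ i j) := by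
  rcases Nat.eq_zero_or_pos r with hr | hr
  · subst hr
    refine ⟨0, fun n Λ hn hsym hnn hN hbal hsep hsup => absurd hsup ?_⟩
    simp only [maxEig_fin_zero]
    push_neg
    linarith
  · set K : ℝ := ((r:ℝ)*(A:ℝ) + 1) + 4*(r:ℝ)^2*(A:ℝ)/ε^2 + 1 with hK
    refine ⟨⌈K^(1000:ℕ)⌉₊, fun n Λ hn hsym hnn hN hbal hsep hsup => ?_⟩
    have hrApos : (0:ℝ) ≤ (r:ℝ)*(A:ℝ) := by positivity
    have hrAd : (0:ℝ) ≤ 4*(r:ℝ)^2*(A:ℝ)/ε^2 := by positivity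
    have hK1 : (1:ℝ) ≤ K := by rw [hK]; linarith
    have hK0 : (0:ℝ) ≤ K := by linarith
    have hA1 : 1 ≤ A := by
      by_contra hA
      have hA0 : A = 0 := by omega
      have h2 := hbal ⟨0, hr⟩ ⟨0, hr⟩
      rw [hA0, zero_mul] at h2
      have := hn ⟨0, hr⟩
      omega
    set nQ : ℝ := ((∑ k, n k : ℕ) : ℝ) with hnQ
    have hnQK : K^(1000:ℕ) ≤ nQ := by
      calc K^(1000:ℕ) ≤ (⌈K^(1000:ℕ)⌉₊ : ℝ) := Nat.le_ceil _
        _ ≤ nQ := by rw [hnQ]; exact_mod_cast hN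
    have hnQ1 : (1:ℝ) ≤ nQ := le_trans (one_le_pow₀ (n := 1000) hK1) hnQK
    have hnQ0 : (0:ℝ) < nQ := lt_of_lt_of_le one_pos hnQ1
    set t : ℝ := nQ ^ (0.001:ℝ) with htdef
    have htK : K ≤ t := by
      have h1 : ((K^(1000:ℕ)) : ℝ) ^ (0.001:ℝ) ≤ nQ ^ (0.001:ℝ) :=
        Real.rpow_le_rpow (by positivity) hnQK (by norm_num)
      have h2 : ((K^(1000:ℕ)) : ℝ) ^ (0.001:ℝ) = K := by
        rw [← Real.rpow_natCast K 1000, ← Real.rpow_mul hK0]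
        norm_num
      rw [htdef, ← h2]
      exact h1
    clear hnQK
    have ht0 : (0:ℝ) < t := by linarith
    set c : ℝ := nQ ^ (0.999:ℝ) with hcdef
    have hc0 : (0:ℝ) ≤ c := Real.rpow_nonneg (le_of_lt hnQ0) _
    have hct : c * t = nQ := by
      rw [hcdef, htdef, ← Real.rpow_add hnQ0]
      norm_num
    have hni : ∀ i, nQ ≤ (r:ℝ)*(A:ℝ)*(n i : ℝ) := by
      intro i
      have h1 : ∀ k : Fin r, (n k : ℝ) ≤ (A:ℝ)*(n i:ℝ) := fun k => by exact_mod_cast hbal k i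
      calc nQ = ∑ k, (n k : ℝ) := by rw [hnQ]; push_cast; rfl
        _ ≤ ∑ _k : Fin r, (A:ℝ)*(n i:ℝ) := Finset.sum_le_sum (fun k _ => h1 k)
        _ = (r:ℝ)*((A:ℝ)*(n i:ℝ)) := by
            rw [Finset.sum_const, Finset.card_univ, Fintype.card_fin, nsmul_eq_mul]
        _ = (r:ℝ)*(A:ℝ)*(n i:ℝ) := by ring
    have hcn : ∀ i, c < (n i : ℝ) := by
      intro i
      have hn1 : (1:ℝ) ≤ (n i : ℝ) := by exact_mod_cast hn i
      have h1 : c * ((r:ℝ)*(A:ℝ) + 1) ≤ nQ := by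
        calc c * ((r:ℝ)*(A:ℝ) + 1) ≤ c * t := by
              refine mul_le_mul_of_nonneg_left ?_ hc0
              rw [hK] at htK
              linarith
          _ = nQ := hct
      nlinarith [hni i]
    set d : Fin r → ℝ := fun i => Real.sqrt (n i) with hddef
    set d' : Fin r → ℝ := fun i => Real.sqrt ((n i : ℝ) - c) with hd'def
    have hdpos : ∀ i, 0 < d i := fun i => Real.sqrt_pos.2 (by exact_mod_cast hn i)
    have hd'pos : ∀ i, 0 < d' i := fun i => Real.sqrt_pos.2 (by linarith [hcn i])
    have hdd : ∀ i, d i * d i = (n i : ℝ) := fun i => Real.mul_self_sqrt (by positivity)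
    have hd'd' : ∀ i, d' i * d' i = (n i : ℝ) - c :=
      fun i => Real.mul_self_sqrt (by linarith [hcn i])
    set Q : Matrix (Fin r) (Fin r) ℝ := fun i j => ((n j : ℝ) - c) * pMat n Λ i j with hQdef
    set S' : Matrix (Fin r) (Fin r) ℝ :=
      fun i j => Λ i j * ((d' i * d' j)/(d i * d j)) with hS'def
    have hsqrtmul : ∀ i j, Real.sqrt ((n i:ℝ) * (n j:ℝ)) = d i * d j := by
      intro i j
      rw [hddef]
      exact Real.sqrt_mul (by positivity) _
    have hconjM : (Matrix.of fun i j => d i * mMat n Λ i j * (d j)⁻¹) = Λ := by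
      ext i j
      simp only [Matrix.of_apply, mMat, pMat, hsqrtmul i j]
      rw [← hdd j]
      field_simp [(hdpos i).ne', (hdpos j).ne']
    have hconjQ : (Matrix.of fun i j => d' i * Q i j * (d' j)⁻¹) = S' := by
      ext i j
      simp only [Matrix.of_apply, hQdef, hS'def, pMat]
      rw [hsqrtmul i j, ← hd'd' j]
      field_simp [(hdpos i).ne', (hdpos j).ne', (hd'pos i).ne', (hd'pos j).ne']
    have hΛsymm : ∀ i j, Λ j i = Λ i j := by
      intro i j
      have h2 := congrFun (congrFun hsym i) j
      simpa [Matrix.transpose_apply] using h2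
    have hΛH : Λ.IsHermitian := by
      ext i j
      simp only [Matrix.conjTranspose_apply, star_trivial]
      exact hΛsymm i j
    have hS'H : S'.IsHermitian := by
      ext i j
      show star (Λ j i * ((d' j * d' i)/(d j * d i))) = _
      simp only [star_trivial]
      rw [hΛsymm i j]
      ring
    have hMe : maxEig (mMat n Λ) = supRay Λ := by
      rw [← maxEig_conj d (fun i => (hdpos i).ne') (mMat n Λ), hconjM]
      exact maxEig_symm hr Λ hΛH
    have hQe : maxEig Q = supRay S' := by
      rw [← maxEig_conj d' (fun i => (hd'pos i).ne') Q, hconjQ]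
      exact maxEig_symm hr S' hS'H
    set C0 : ℝ := 1/ε * (2*((r:ℝ)*(A:ℝ))/t) with hC0def
    have hC00 : 0 ≤ C0 := by
      rw [hC0def]
      positivity
    have hdiff : ∀ i j, |Λ i j - S' i j| ≤ C0 := by
      intro i j
      have hab : S' i j = Λ i j * ((d' i / d i) * (d' j / d j)) := by
        rw [hS'def]
        simp only
        rw [div_mul_div_comm]
      set a := d' i / d i with hadef
      set b := d' j / d j with hbdef
      have ha0 : 0 ≤ a := le_of_lt (div_pos (hd'pos i) (hdpos i))
      have hb0 : 0 ≤ b := le_of_lt (div_pos (hd'pos j) (hdpos j))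
      have ha1 : a ≤ 1 := by
        rw [hadef, div_le_one (hdpos i), hddef, hd'def]
        exact Real.sqrt_le_sqrt (by linarith)
      have hb1 : b ≤ 1 := by
        rw [hbdef, div_le_one (hdpos j), hddef, hd'def]
        exact Real.sqrt_le_sqrt (by linarith)
      have hsq : ∀ k : Fin r, 1 - (d' k / d k)^2 = c / (n k : ℝ) := by
        intro k
        have h2 : (d' k / d k)^2 = ((n k:ℝ) - c)/(n k:ℝ) := by
          rw [div_pow, sq, sq, hd'd' k, hdd k]
        rw [h2]
        have h3 : (n k : ℝ) ≠ 0 := by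
          have := hn k
          positivity
        field_simp
        ring
      have hfr : ∀ k : Fin r, c / (n k : ℝ) ≤ (r:ℝ)*(A:ℝ)/t := by
        intro k
        have h3 : (0:ℝ) < (n k : ℝ) := by exact_mod_cast hn k
        rw [div_le_div_iff₀ h3 ht0, hct]
        exact hni k
      have hone : 1 - a*b ≤ (1 - a^2) + (1 - b^2) := one_sub_mul_le_aux ha0 ha1 hb0 hb1
      have hone0 : 0 ≤ 1 - a*b := one_sub_mul_nonneg_aux ha0 ha1 hb0 hb1
      rcases hsep i j with hz | ⟨hl, hu⟩
      · rw [hab, hz]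
        simpa using hC00
      · have heq2 : Λ i j - S' i j = Λ i j * (1 - a*b) := by rw [hab]; ring
        rw [heq2, abs_of_nonneg (mul_nonneg (by linarith) hone0)]
        calc Λ i j * (1 - a*b) ≤ (1/ε) * ((1 - a^2) + (1 - b^2)) := by
              refine mul_le_mul hu hone hone0 ?_
              positivity
          _ ≤ (1/ε) * ((r:ℝ)*(A:ℝ)/t + (r:ℝ)*(A:ℝ)/t) := by
              refine mul_le_mul_of_nonneg_left ?_ (by positivity)
              have h5 := hsq i
              have h6 := hsq j
              rw [← hadef] at h5
              rw [← hbdef] at h6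
              have := hfr i
              have := hfr j
              linarith [hsq i, hsq j, hfr i, hfr j]
          _ = C0 := by rw [hC0def]; ring
    have hkey : |maxEig (mMat n Λ) - maxEig Q| ≤ (r:ℝ) * C0 := by
      rw [hMe, hQe]
      exact abs_supRay_sub_le hr Λ S' hdiff
    have hKt4 : 4*(r:ℝ)^2*(A:ℝ)/ε^2 ≤ t := by
      have h1 : 4*(r:ℝ)^2*(A:ℝ)/ε^2 ≤ K := by rw [hK]; linarith
      exact le_trans h1 htK
    have hrc : (r:ℝ) * C0 ≤ ε/2 := by
      have heq : (r:ℝ) * C0 = 2*(r:ℝ)^2*(A:ℝ)/(ε*t) := by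
        rw [hC0def]
        field_simp
      rw [heq, div_le_iff₀ (mul_pos hε ht0)]
      have h4 : 4*(r:ℝ)^2*(A:ℝ) ≤ ε^2 * t := by
        have h5 := mul_le_mul_of_nonneg_left hKt4 (le_of_lt (show (0:ℝ) < ε^2 by positivity))
        calc 4*(r:ℝ)^2*(A:ℝ) = ε^2 * (4*(r:ℝ)^2*(A:ℝ)/ε^2) := by field_simp
          _ ≤ ε^2 * t := h5
      have h6 : ε/2 * (ε*t) = (ε^2*t)/2 := by ring
      rw [h6]
      linarith
    have habs : |maxEig (mMat n Λ) - maxEig Q| ≤ ε/2 := le_trans hkey hrc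
    refine ⟨habs, ?_⟩
    have h7 := abs_sub_le_iff.1 habs
    linarith [h7.1]

end Pandemic
end
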